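/- arXiv:0904.4497 — 6 statements merged into one kernel-verified Lean document; each statement's English description precedes it below -/
import Mathlib

section
/- Under hypotheses (H), there exists a constant D > 0 such that lim_{s→∞} f'(s)·s^{δ(n−p+2)} = D; that is, f'(s) is asymptotically equivalent to D·s^{−δ(n−(p−2))} as s → +∞. -/
open Real Filter Topology

/-- Squared energy density `|dF|²(s) = f'(s)² + n · j(f(s))² / g(s)²` of the rotationally
symmetric map `F(s,θ) = (f(s),θ)` between `M_g` and `N_j`. -/
noncomputable def energyDensitySq (n : ℕ) (g j f : ℝ → ℝ) (s : ℝ) : ℝ :=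
  (deriv f s) ^ 2 + (n : ℝ) * (j (f s)) ^ 2 / (g s) ^ 2

/-- `f` solves the rotationally symmetric `p`-harmonic equation `τ_p(F) = 0`. -/
def SolvesPHarmonic (n : ℕ) (p : ℝ) (g j f : ℝ → ℝ) : Prop :=
  ∀ s : ℝ, 0 < s → 0 < energyDensitySq n g j f s →
    deriv (deriv f) s
      + ((n : ℝ) / (g s) ^ 2) * (g s * deriv g s * deriv f s - j (f s) * deriv j (f s))
      + (p - 2) * (energyDensitySq n g j f s)⁻¹ * deriv f s *
          (deriv f s * deriv (deriv f) s
            + (n : ℝ) * (j (f s) / (g s) ^ 3) *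
                (deriv j (f s) * deriv f s * g s - j (f s) * deriv g s)) = 0

lemma alg_aux (U U' G G' J J' A E p nn R : ℝ) (hG : G ≠ 0) (hE : E ≠ 0)
    (hODE : U' + (nn/G^2)*(G*G'*U - J*J') + (p-2)*E⁻¹*U*(U*U' + nn*(J/G^3)*(J'*U*G - J*G')) = 0) :
    U' * (R*G) * A + (R*G) *
      ((2*U*U' + (nn*(2*J*(J'*U))*G^2 - nn*J^2*(2*G*G'))/(G^2)^2) * ((p-2)/2) * (A/E)) * U
      + (nn * R * G') * A * U
    = nn * (R*G) / G^2 * A * (J*J') := by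
  have key : U' * (R*G) * A + (R*G) *
      ((2*U*U' + (nn*(2*J*(J'*U))*G^2 - nn*J^2*(2*G*G'))/(G^2)^2) * ((p-2)/2) * (A/E)) * U
      + (nn * R * G') * A * U
      - nn * (R*G) / G^2 * A * (J*J')
      = (R*G*A) * (U' + (nn/G^2)*(G*G'*U - J*J')
          + (p-2)*E⁻¹*U*(U*U' + nn*(J/G^3)*(J'*U*G - J*G'))) := by
    field_simp
    ring
  rw [hODE, mul_zero] at key
  linarith

lemma rpow_add_le_two_rpow (x y q : ℝ) (hx : 0 ≤ x) (hy : 0 ≤ y) (hq : 0 ≤ q) :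
    (x + y) ^ q ≤ 2 ^ q * (x ^ q + y ^ q) := by
  have hmax : x + y ≤ 2 * max x y := by
    rcases le_total x y with h | h
    · rw [max_eq_right h]; linarith
    · rw [max_eq_left h]; linarith
  have hmn : (0:ℝ) ≤ max x y := le_trans hx (le_max_left _ _)
  calc (x + y) ^ q ≤ (2 * max x y) ^ q := by
        exact Real.rpow_le_rpow (by linarith) hmax hq
    _ = 2 ^ q * (max x y) ^ q := Real.mul_rpow (by norm_num) hmn
    _ ≤ 2 ^ q * (x ^ q + y ^ q) := by
        have : (max x y) ^ q ≤ x ^ q + y ^ q := by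
          rcases le_total x y with h | h
          · rw [max_eq_right h]
            have : (0:ℝ) ≤ x ^ q := Real.rpow_nonneg hx q
            linarith
          · rw [max_eq_left h]
            have : (0:ℝ) ≤ y ^ q := Real.rpow_nonneg hy q
            linarith
        have h2 : (0:ℝ) ≤ (2:ℝ) ^ q := Real.rpow_nonneg (by norm_num) q
        nlinarith

lemma tendsto_of_monotoneOn_bdd {h : ℝ → ℝ} {s₀ B : ℝ}
    (mono : ∀ x y, s₀ ≤ x → x ≤ y → h x ≤ h y) (bdd : ∀ s, s₀ ≤ s → h s ≤ B) :
    ∃ l, Tendsto h atTop (𝓝 l) ∧ h s₀ ≤ l := by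
  set H : ℝ → ℝ := fun x => h (max x s₀) with hH
  have hmono : Monotone H := fun x y hxy =>
    mono _ _ (le_max_right _ _) (max_le_max hxy le_rfl)
  rcases tendsto_of_monotone hmono with hc | ⟨l, hl⟩
  · exfalso
    obtain ⟨x, hx⟩ := (hc.eventually_ge_atTop (B + 1)).exists
    have : H x ≤ B := bdd _ (le_max_right _ _)
    linarith
  · refine ⟨l, ?_, ?_⟩
    · refine hl.congr' ?_
      filter_upwards [eventually_ge_atTop s₀] with x hx
      simp [hH, max_eq_left hx]
    · have h0 : H s₀ = h s₀ := by simp [hH]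
      have : H s₀ ≤ l := ge_of_tendsto hl (by
        filter_upwards [eventually_ge_atTop s₀] with x hx
        exact hmono hx)
      linarith

lemma hasDerivAt_h (n : ℕ) (p : ℝ) (g j f : ℝ → ℝ) (s : ℝ) (hs : 0 < s)
    (hn : 1 ≤ n) (hg : ContDiffOn ℝ 1 g (Set.Ioi 0)) (hj : ContDiffOn ℝ 1 j (Set.Ioi 0))
    (hgpos : ∀ s > (0:ℝ), 0 < g s)
    (hf : ContDiffOn ℝ 2 f (Set.Ici 0))
    (hfs : 0 < f s) (hf's : 0 < deriv f s)
    (hsol : SolvesPHarmonic n p g j f) :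
    HasDerivAt (fun s => g s ^ n * energyDensitySq n g j f s ^ ((p-2)/2) * deriv f s)
      ((n : ℝ) * g s ^ n / g s ^ 2 * energyDensitySq n g j f s ^ ((p-2)/2)
        * (j (f s) * deriv j (f s))) s := by
  have hGpos := hgpos s hs
  have hEpos : 0 < energyDensitySq n g j f s := by
    have : 0 ≤ (n : ℝ) * (j (f s)) ^ 2 / (g s) ^ 2 := by positivity
    have h1 : 0 < (deriv f s) ^ 2 := by positivity
    unfold energyDensitySq; linarith
  have hODE := hsol s hs hEpos
  have hgd : HasDerivAt g (deriv g s) s :=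
    ((hg.differentiableOn (by norm_num)).differentiableAt (isOpen_Ioi.mem_nhds hs)).hasDerivAt
  have hjd : HasDerivAt j (deriv j (f s)) (f s) :=
    ((hj.differentiableOn (by norm_num)).differentiableAt (isOpen_Ioi.mem_nhds hfs)).hasDerivAt
  have hfI : ContDiffOn ℝ 2 f (Set.Ioi 0) := hf.mono Set.Ioi_subset_Ici_self
  have hfd : HasDerivAt f (deriv f s) s :=
    ((hfI.differentiableOn (by norm_num)).differentiableAt (isOpen_Ioi.mem_nhds hs)).hasDerivAt
  have hf'c : ContDiffOn ℝ 1 (deriv f) (Set.Ioi 0) :=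
    hfI.deriv_of_isOpen isOpen_Ioi (by norm_num)
  have hfd2 : HasDerivAt (deriv f) (deriv (deriv f) s) s :=
    ((hf'c.differentiableOn (by norm_num)).differentiableAt (isOpen_Ioi.mem_nhds hs)).hasDerivAt
  set U := deriv f s
  set U' := deriv (deriv f) s
  set G := g s
  set G' := deriv g s
  set J := j (f s)
  set J' := deriv j (f s)
  have hJd : HasDerivAt (fun s => j (f s)) (J' * U) s := hjd.comp s hfd
  have hnum : HasDerivAt (fun s => (n:ℝ) * (j (f s))^2) ((n:ℝ) * (2 * J * (J' * U))) s := by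
    exact ((hJd.pow 2).const_mul _).congr_deriv (by push_cast; ring)
  have hden : HasDerivAt (fun s => (g s)^2) (2 * G * G') s := by
    exact (hgd.pow 2).congr_deriv (by push_cast; ring)
  have hfrac : HasDerivAt (fun s => (n:ℝ) * (j (f s))^2 / (g s)^2)
      (((n:ℝ) * (2 * J * (J' * U)) * G^2 - (n:ℝ) * J^2 * (2 * G * G')) / (G^2)^2) s :=
    hnum.div hden (by positivity)
  have hE : HasDerivAt (energyDensitySq n g j f)
      (2*U*U' + ((n:ℝ)*(2*J*(J'*U))*G^2 - (n:ℝ)*J^2*(2*G*G'))/(G^2)^2) s := by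
    have hu2 : HasDerivAt (fun s => (deriv f s)^2) (2 * U * U') s :=
      (hfd2.pow 2).congr_deriv (by push_cast; ring)
    exact (hu2.add hfrac).congr_deriv rfl
  have hEq : HasDerivAt (fun s => energyDensitySq n g j f s ^ ((p-2)/2))
      ((2*U*U' + ((n:ℝ)*(2*J*(J'*U))*G^2 - (n:ℝ)*J^2*(2*G*G'))/(G^2)^2) * ((p-2)/2)
        * (energyDensitySq n g j f s ^ ((p-2)/2) / energyDensitySq n g j f s)) s := by
    have := hE.rpow_const (p := (p-2)/2) (Or.inl hEpos.ne')
    rwa [Real.rpow_sub_one hEpos.ne'] at this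
  have hgn : HasDerivAt (fun s => g s ^ n) ((n:ℝ) * G ^ (n-1) * G') s := hgd.pow n
  have hprod := (hgn.mul hEq).mul hfd2
  refine hprod.congr_deriv ?_
  simp only [Pi.mul_apply]
  set A := energyDensitySq n g j f s ^ ((p-2)/2) with hA
  set E := energyDensitySq n g j f s with hEdef
  have hGn : G ^ n = G ^ (n-1) * G := by
    conv_lhs => rw [show n = (n-1) + 1 by omega]
    rw [pow_succ]
  rw [hGn]
  have hUU : deriv f s = U := rfl
  rw [hUU]
  have := alg_aux U U' G G' J J' A E p (n:ℝ) (G ^ (n-1)) hGpos.ne' hEpos.ne' hODE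
  linarith [this]


set_option maxHeartbeats 1000000 in
/-- **Lemma 2.4** (asymptotic estimate). Under hypotheses (H), every positive solution of
the rotationally symmetric `p`-harmonic equation satisfies
`f'(s) ~ D · s^{-δ(n-(p-2))}` as `s → +∞`, for some constant `D > 0`. -/
theorem asymptotic_deriv (n : ℕ) (p a C₁ δ : ℝ) (g j f : ℝ → ℝ)
    (hn : 2 ≤ n) (hp₁ : max 2 (n : ℝ) < p) (hp₂ : p < (n : ℝ) + 1)
    (ha : 0 < a) (hC₁ : 0 < C₁) (hδ : (p - (n : ℝ))⁻¹ < δ)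
    (hg : ContDiffOn ℝ 1 g (Set.Ioi 0)) (hj : ContDiffOn ℝ 1 j (Set.Ioi 0))
    (hg0 : g 0 = 0) (hj0 : j 0 = 0)
    (hg'0 : HasDerivWithinAt g 1 (Set.Ici 0) 0) (hj'0 : HasDerivWithinAt j 1 (Set.Ici 0) 0)
    (hgpos : ∀ s > (0:ℝ), 0 < g s) (hjpos : ∀ t > (0:ℝ), 0 < j t)
    (hj' : ∀ t > (0:ℝ), 0 < deriv j t ∧ deriv j t ≤ a)
    (hg' : ∀ᶠ s in atTop, 0 < deriv g s)
    (hgasym : Tendsto (fun s => g s / (C₁ * s ^ δ)) atTop (𝓝 1))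
    (hf : ContDiffOn ℝ 2 f (Set.Ici 0))
    (hfbdd : ∃ B, ∀ s ≥ (0:ℝ), |f s| ≤ B)
    (hf0 : f 0 = 0)
    (hfpos : ∀ s > (0:ℝ), 0 < f s) (hf'pos : ∀ s > (0:ℝ), 0 < deriv f s)
    (hsol : SolvesPHarmonic n p g j f) :
    ∃ D : ℝ, 0 < D ∧
      Tendsto (fun s : ℝ => deriv f s * s ^ (δ * ((n : ℝ) - p + 2))) atTop (𝓝 D) := by
  obtain ⟨B, hB⟩ := hfbdd
  -- Part 1: scalar facts
  have hnR : (2:ℝ) ≤ (n:ℝ) := by exact_mod_cast hn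
  have hp2 : (2:ℝ) < p := (le_max_left 2 (n:ℝ)).trans_lt hp₁
  have hpn : (n:ℝ) < p := (le_max_right 2 (n:ℝ)).trans_lt hp₁
  have hpn0 : 0 < p - (n:ℝ) := by linarith
  have hδpos : 0 < δ := lt_trans (inv_pos.2 hpn0) hδ
  have hγ1 : 1 < δ * (p - (n:ℝ)) := by
    have := mul_lt_mul_of_pos_right hδ hpn0
    rwa [inv_mul_cancel₀ hpn0.ne'] at this
  set q : ℝ := (p - 2) / 2 with hqdef
  have hqpos : 0 < q := by rw [hqdef]; linarith
  set θ : ℝ := (p - 2) / (p - 1) with hθdef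
  have hθpos : 0 < θ := by rw [hθdef]; apply div_pos <;> linarith
  have hθ1 : θ < 1 := by
    rw [hθdef, div_lt_one (by linarith : (0:ℝ) < p - 1)]; linarith
  set μ : ℝ := (2 * p - (n:ℝ) - 2) / (p - 1) with hμdef
  have hμpos : 0 < μ := by
    rw [hμdef]; apply div_pos <;> nlinarith
  have hμrel : (n:ℝ) - 2 - (n:ℝ) * θ = -μ := by
    have hp1 : (p:ℝ) - 1 ≠ 0 := by linarith
    rw [hθdef, hμdef]
    field_simp
    ring
  have hμge : p - (n:ℝ) ≤ μ := by
    rw [hμdef, le_div_iff₀ (by linarith : (0:ℝ) < p - 1)]; nlinarith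
  set γ : ℝ := δ * (p - (n:ℝ)) with hγdef
  have hγpos : 0 < γ := by positivity
  have hγgt1 : 1 < γ := hγ1
  have hδμ : γ ≤ δ * μ := by
    rw [hγdef]; exact mul_le_mul_of_nonneg_left hμge hδpos.le
  -- Part 2: limit of f
  have hfC : ContinuousOn f (Set.Ici 0) := hf.continuousOn
  have hfmono : MonotoneOn f (Set.Ici 0) := by
    apply monotoneOn_of_deriv_nonneg (convex_Ici 0) hfC
    · intro x hx
      rw [interior_Ici] at hx
      exact (((hf.mono Set.Ioi_subset_Ici_self).differentiableOn
        (by norm_num)).differentiableAt (isOpen_Ioi.mem_nhds hx)).differentiableWithinAt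
    · intro x hx
      rw [interior_Ici] at hx
      exact (hf'pos x hx).le
  have hfmono' : ∀ x y, (1:ℝ) ≤ x → x ≤ y → f x ≤ f y := fun x y hx hxy =>
    hfmono (by simp; linarith) (by simp; linarith) hxy
  have hfbd : ∀ s, (1:ℝ) ≤ s → f s ≤ B := fun s hs =>
    le_of_abs_le (hB s (by linarith))
  obtain ⟨L, hfL, hf1L⟩ := tendsto_of_monotoneOn_bdd hfmono' hfbd
  have hf1pos : 0 < f 1 := hfpos 1 one_pos
  have hLpos : 0 < L := lt_of_lt_of_le hf1pos hf1L
  have hjcont : ContinuousAt j L :=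
    (hj.continuousOn.continuousAt (isOpen_Ioi.mem_nhds hLpos))
  have hJlim : Tendsto (fun s => j (f s)) atTop (𝓝 (j L)) := hjcont.tendsto.comp hfL
  have hjLpos : 0 < j L := hjpos L hLpos
  -- Part 3: E, h and derivative
  set E : ℝ → ℝ := energyDensitySq n g j f with hEdef
  have hEpos : ∀ s, 0 < s → 0 < E s := by
    intro s hs
    have h0 : 0 ≤ (n : ℝ) * (j (f s)) ^ 2 / (g s) ^ 2 := by positivity
    have h1 : 0 < (deriv f s) ^ 2 := by
      have := hf'pos s hs; positivity
    rw [hEdef]; unfold energyDensitySq; linarith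
  set hfn : ℝ → ℝ := fun s => g s ^ n * E s ^ q * deriv f s with hhdef
  set Dh : ℝ → ℝ := fun s => (n : ℝ) * g s ^ n / g s ^ 2 * E s ^ q
      * (j (f s) * deriv j (f s)) with hDhdef
  have hhd : ∀ s, 0 < s → HasDerivAt hfn (Dh s) s := by
    intro s hs
    exact hasDerivAt_h n p g j f s hs (by omega) hg hj hgpos hf (hfpos s hs) (hf'pos s hs) hsol
  have hhpos : ∀ s, 0 < s → 0 < hfn s := by
    intro s hs
    have h1 := hgpos s hs
    have h2 := hEpos s hs
    have h3 := hf'pos s hs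
    rw [hhdef]
    have : (0:ℝ) < E s ^ q := Real.rpow_pos_of_pos h2 q
    positivity
  have hDhpos : ∀ s, 0 < s → 0 < Dh s := by
    intro s hs
    have h1 := hgpos s hs
    have h2 := hEpos s hs
    have h3 := hjpos (f s) (hfpos s hs)
    have h4 := (hj' (f s) (hfpos s hs)).1
    have h5 : (0:ℝ) < E s ^ q := Real.rpow_pos_of_pos h2 q
    have h6 : (0:ℝ) < (n:ℝ) := by linarith
    rw [hDhdef]
    positivity
  have hhmono : MonotoneOn hfn (Set.Ici 1) := by
    apply monotoneOn_of_deriv_nonneg (convex_Ici 1)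
    · exact fun s hs => ((hhd s (lt_of_lt_of_le one_pos hs)).continuousAt).continuousWithinAt
    · intro x hx
      rw [interior_Ici] at hx
      exact ((hhd x (lt_trans one_pos hx)).differentiableAt).differentiableWithinAt
    · intro x hx
      rw [interior_Ici] at hx
      rw [(hhd x (lt_trans one_pos hx)).deriv]
      exact (hDhpos x (lt_trans one_pos hx)).le
  set c : ℝ := hfn 1 with hcdef
  have hcpos : 0 < c := hhpos 1 one_pos
  have hhge : ∀ s, (1:ℝ) ≤ s → c ≤ hfn s := by
    intro s hs
    exact hhmono (by simp) (by simpa using hs) hs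
  -- Part 4: bounds M m on j ∘ f, s₀ and bounds on g
  have hIcc_sub : Set.Icc (f 1) B ⊆ Set.Ioi 0 := fun t ht => lt_of_lt_of_le hf1pos ht.1
  have hIcc_ne : (Set.Icc (f 1) B).Nonempty := ⟨f 1, le_refl _, hfbd 1 le_rfl⟩
  have hjc : ContinuousOn j (Set.Icc (f 1) B) := hj.continuousOn.mono hIcc_sub
  obtain ⟨tM, htM, htMle⟩ := (isCompact_Icc).exists_isMaxOn hIcc_ne hjc
  obtain ⟨tm, htm, htmle⟩ := (isCompact_Icc).exists_isMinOn hIcc_ne hjc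
  set M : ℝ := j tM with hMdef
  set m : ℝ := j tm with hmdef
  have hMpos : 0 < M := hjpos tM (hIcc_sub htM)
  have hmpos : 0 < m := hjpos tm (hIcc_sub htm)
  have hfmem : ∀ s, (1:ℝ) ≤ s → f s ∈ Set.Icc (f 1) B := fun s hs =>
    ⟨hfmono' 1 s le_rfl hs, hfbd s hs⟩
  have hJM : ∀ s, (1:ℝ) ≤ s → j (f s) ≤ M := fun s hs => htMle (hfmem s hs)
  have hJm : ∀ s, (1:ℝ) ≤ s → m ≤ j (f s) := fun s hs => htmle (hfmem s hs)
  -- s₀ with g bounds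
  have hgbd : ∀ᶠ s in atTop, (C₁/2) * s ^ δ ≤ g s ∧ g s ≤ 2 * C₁ * s ^ δ := by
    have hball := hgasym (Metric.ball_mem_nhds (1:ℝ) (by norm_num : (0:ℝ) < 1/2))
    rw [mem_map] at hball
    filter_upwards [hball, eventually_ge_atTop (1:ℝ)] with s hs hs1
    have hspos : (0:ℝ) < s := lt_of_lt_of_le one_pos hs1
    have hsδ : (0:ℝ) < s ^ δ := Real.rpow_pos_of_pos hspos δ
    have hden : (0:ℝ) < C₁ * s ^ δ := by positivity
    simp only [Set.mem_preimage, Metric.mem_ball, Real.dist_eq] at hs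
    have h1 : |g s / (C₁ * s ^ δ) - 1| < 1/2 := hs
    rw [abs_lt] at h1
    constructor
    · have : (1:ℝ)/2 ≤ g s / (C₁ * s ^ δ) := by linarith
      calc (C₁/2) * s ^ δ = (1/2) * (C₁ * s ^ δ) := by ring
        _ ≤ (g s / (C₁ * s ^ δ)) * (C₁ * s ^ δ) := by
            apply mul_le_mul_of_nonneg_right this hden.le
        _ = g s := by field_simp
    · have : g s / (C₁ * s ^ δ) ≤ 2 := by linarith
      calc g s = (g s / (C₁ * s ^ δ)) * (C₁ * s ^ δ) := by field_simp
        _ ≤ 2 * (C₁ * s ^ δ) := by apply mul_le_mul_of_nonneg_right this hden.le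
        _ = 2 * C₁ * s ^ δ := by ring
  obtain ⟨s₀', hs₀'⟩ := eventually_atTop.1 hgbd
  set s₀ : ℝ := max s₀' 1 with hs₀def
  have hs₀1 : (1:ℝ) ≤ s₀ := le_max_right _ _
  have hs₀pos : (0:ℝ) < s₀ := lt_of_lt_of_le one_pos hs₀1
  have hglb : ∀ s, s₀ ≤ s → (C₁/2) * s ^ δ ≤ g s := fun s hs =>
    (hs₀' s (le_trans (le_max_left _ _) hs)).1
  have hgub : ∀ s, s₀ ≤ s → g s ≤ 2 * C₁ * s ^ δ := fun s hs =>
    (hs₀' s (le_trans (le_max_left _ _) hs)).2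
  have hfneq : ∀ s, hfn s = g s ^ n * E s ^ q * deriv f s := fun s => rfl
  have hDheq : ∀ s, Dh s = (n : ℝ) * g s ^ n / g s ^ 2 * E s ^ q
      * (j (f s) * deriv j (f s)) := fun s => rfl
  have hEeq : ∀ s, E s = (deriv f s)^2 + (n:ℝ) * (j (f s))^2 / (g s)^2 := fun s => rfl
  -- Part 5 : the key differential inequality
  set K₁ : ℝ := (n:ℝ) * (M * a) * 2 ^ q * c ^ (θ - 1) * (C₁/2) ^ (-μ) with hK₁def
  set K₂ : ℝ := (n:ℝ) * (M * a) * 2 ^ q * ((n:ℝ) * M ^ 2) ^ q * (C₁/2) ^ ((n:ℝ) - p) / c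
    with hK₂def
  set C₆ : ℝ := K₁ + K₂ with hC₆def
  have hnpos : (0:ℝ) < (n:ℝ) := by linarith
  have hK₁pos : 0 < K₁ := by
    have h1 : (0:ℝ) < (2:ℝ) ^ q := Real.rpow_pos_of_pos (by norm_num) q
    have h2 : (0:ℝ) < c ^ (θ-1) := Real.rpow_pos_of_pos hcpos _
    have h3 : (0:ℝ) < (C₁/2) ^ (-μ) := Real.rpow_pos_of_pos (by linarith) _
    rw [hK₁def]; positivity
  have hK₂pos : 0 < K₂ := by
    have h1 : (0:ℝ) < (2:ℝ) ^ q := Real.rpow_pos_of_pos (by norm_num) q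
    have h2 : (0:ℝ) < ((n:ℝ) * M ^ 2) ^ q := Real.rpow_pos_of_pos (by positivity) _
    have h3 : (0:ℝ) < (C₁/2) ^ ((n:ℝ) - p) := Real.rpow_pos_of_pos (by linarith) _
    rw [hK₂def]; positivity
  have hC₆pos : 0 < C₆ := by rw [hC₆def]; linarith
  have hkey : ∀ s, s₀ ≤ s → Dh s ≤ C₆ * hfn s * s ^ (-γ) := by
    intro s hs
    have hs1 : (1:ℝ) ≤ s := hs₀1.trans hs
    have hsp : (0:ℝ) < s := lt_of_lt_of_le one_pos hs1
    have hG := hgpos s hsp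
    have hU := hf'pos s hsp
    have hJp := hjpos (f s) (hfpos s hsp)
    have hEv := hEpos s hsp
    have hhp := hhpos s hsp
    have hhc := hhge s hs1
    have hJ'p := (hj' (f s) (hfpos s hsp)).1
    have hJ'a := (hj' (f s) (hfpos s hsp)).2
    have hJM' := hJM s hs1
    have hsγ : (0:ℝ) < s ^ (-γ) := Real.rpow_pos_of_pos hsp _
    -- conversion of natural powers of g s to rpow
    have hGn : (g s : ℝ) ^ n = g s ^ ((n:ℝ)) := (Real.rpow_natCast (g s) n).symm
    have hG2 : (g s : ℝ) ^ (2:ℕ) = g s ^ ((2:ℝ)) := by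
      rw [← Real.rpow_natCast (g s) 2]; norm_num
    -- e1 : U^(p-2) = (U^2)^q
    have e1 : (deriv f s) ^ (p-2) = ((deriv f s)^2 : ℝ) ^ q := by
      rw [show p - 2 = 2 * q by rw [hqdef]; ring, Real.rpow_mul hU.le]
      congr 1
      rw [← Real.rpow_natCast (deriv f s) 2]; norm_num
    -- Step 1 : U^(p-1) ≤ hfn s / g^(n)
    have hstep1 : (deriv f s) ^ (p-1) ≤ hfn s / g s ^ ((n:ℝ)) := by
      rw [le_div_iff₀ (by rw [← hGn]; positivity)]
      have h1 : (deriv f s)^2 ≤ E s := by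
        rw [hEeq]
        have : (0:ℝ) ≤ (n:ℝ) * (j (f s))^2 / (g s)^2 := by positivity
        linarith
      have h2 : (deriv f s) ^ (p-2) ≤ E s ^ q := by
        rw [e1]; exact Real.rpow_le_rpow (by positivity) h1 hqpos.le
      have h3 : (deriv f s)^(p-1) = (deriv f s)^(p-2) * deriv f s := by
        rw [show p - 1 = (p-2) + 1 by ring, Real.rpow_add hU, Real.rpow_one]
      rw [h3, hfneq, ← hGn]
      calc (deriv f s)^(p-2) * deriv f s * g s ^ n
          ≤ E s ^ q * deriv f s * g s ^ n :=
            mul_le_mul_of_nonneg_right (mul_le_mul_of_nonneg_right h2 hU.le)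
              (pow_nonneg hG.le n)
        _ = g s ^ n * E s ^ q * deriv f s := by ring
    -- Step 2 : U^(p-2) ≤ hfn^θ / g^(nθ)
    have hstep2 : (deriv f s) ^ (p-2) ≤ hfn s ^ θ / g s ^ ((n:ℝ)*θ) := by
      have hgnpos : (0:ℝ) < g s ^ ((n:ℝ)) := Real.rpow_pos_of_pos hG _
      have e2 : (deriv f s) ^ (p-2) = ((deriv f s)^(p-1)) ^ θ := by
        rw [show p - 2 = (p-1) * θ by
          have hne : p - 1 ≠ 0 := by linarith
          rw [hθdef, mul_comm ((p:ℝ)-1), div_mul_cancel₀ _ hne], Real.rpow_mul hU.le]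
      rw [e2]
      calc ((deriv f s)^(p-1)) ^ θ
          ≤ (hfn s / g s ^ ((n:ℝ))) ^ θ :=
            Real.rpow_le_rpow (Real.rpow_nonneg hU.le _) hstep1 hθpos.le
        _ = hfn s ^ θ / g s ^ ((n:ℝ)*θ) := by
            rw [Real.div_rpow hhp.le hgnpos.le, ← Real.rpow_mul hG.le]
    -- Step 3 : hfn^θ ≤ c^(θ-1) * hfn
    have hstep3 : hfn s ^ θ ≤ c ^ (θ-1) * hfn s := by
      have e3 : hfn s ^ θ = hfn s ^ (θ-1) * hfn s := by
        nth_rewrite 1 [show θ = (θ-1) + 1 by ring]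
        rw [Real.rpow_add hhp, Real.rpow_one]
      rw [e3]
      have h4 : hfn s ^ (θ-1) ≤ c ^ (θ-1) :=
        Real.rpow_le_rpow_of_nonpos hcpos hhc (by linarith)
      exact mul_le_mul_of_nonneg_right h4 hhp.le
    -- Step 4 : E^q ≤ 2^q * (U^(p-2) + (nM²)^q / g^(p-2))
    have hstep4 : E s ^ q ≤ 2^q * ((deriv f s)^(p-2) + ((n:ℝ)*M^2)^q / g s ^ (p-2)) := by
      have h1 : E s ≤ (deriv f s)^2 + (n:ℝ)*M^2/(g s)^2 := by
        rw [hEeq]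
        have hj2 : (j (f s))^2 ≤ M^2 := pow_le_pow_left₀ hJp.le hJM' 2
        have : (n:ℝ) * (j (f s))^2 / (g s)^2 ≤ (n:ℝ)*M^2/(g s)^2 := by
          apply div_le_div_of_nonneg_right ?_ (by positivity)
          · exact mul_le_mul_of_nonneg_left hj2 hnpos.le
        linarith
      have h2 := rpow_add_le_two_rpow ((deriv f s)^2) ((n:ℝ)*M^2/(g s)^2) q
        (by positivity) (by positivity) hqpos.le
      have h3 : E s ^ q ≤ 2^q * (((deriv f s)^2)^q + ((n:ℝ)*M^2/(g s)^2)^q) :=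
        le_trans (Real.rpow_le_rpow hEv.le h1 hqpos.le) h2
      have e5 : ((n:ℝ)*M^2/(g s)^2 : ℝ)^q = ((n:ℝ)*M^2)^q / g s ^ (p-2) := by
        rw [Real.div_rpow (by positivity) (by positivity)]
        congr 1
        rw [hG2, ← Real.rpow_mul hG.le]
        congr 1
        rw [hqdef]; ring
      rw [e5, ← e1] at h3
      exact h3
    -- Step 5 : bounds on powers of g via s
    have hgpow : ∀ β : ℝ, β ≤ 0 → g s ^ β ≤ (C₁/2) ^ β * s ^ (δ * β) := by
      intro β hβ
      have h1 : (C₁/2) * s^δ ≤ g s := hglb s hs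
      have h2 : (0:ℝ) < (C₁/2) * s^δ := by positivity
      calc g s ^ β ≤ ((C₁/2) * s^δ) ^ β := Real.rpow_le_rpow_of_nonpos h2 h1 hβ
        _ = (C₁/2)^β * (s^δ)^β := Real.mul_rpow (by positivity) (by positivity)
        _ = (C₁/2)^β * s^(δ*β) := by rw [← Real.rpow_mul hsp.le]
    -- assemble
    have hJJ' : j (f s) * deriv j (f s) ≤ M * a :=
      mul_le_mul hJM' hJ'a hJ'p.le hMpos.le
    have hgnθpos : (0:ℝ) < g s ^ ((n:ℝ)*θ) := Real.rpow_pos_of_pos hG _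
    have hgp2pos : (0:ℝ) < g s ^ (p-2) := Real.rpow_pos_of_pos hG _
    have hg2pos : (0:ℝ) < g s ^ ((2:ℝ)) := Real.rpow_pos_of_pos hG _
    have hgnRpos : (0:ℝ) < g s ^ ((n:ℝ)) := Real.rpow_pos_of_pos hG _
    have h2qpos : (0:ℝ) < (2:ℝ)^q := Real.rpow_pos_of_pos two_pos q
    have hcθ : (0:ℝ) < c ^ (θ-1) := Real.rpow_pos_of_pos hcpos _
    have hnM2q : (0:ℝ) < ((n:ℝ)*M^2)^q := Real.rpow_pos_of_pos (by positivity) _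
    have hEtot : E s ^ q ≤
        2^q * (c^(θ-1) * hfn s / g s ^ ((n:ℝ)*θ) + ((n:ℝ)*M^2)^q / g s ^ (p-2)) := by
      refine le_trans hstep4 ?_
      have h1 : (deriv f s)^(p-2) ≤ c^(θ-1) * hfn s / g s ^ ((n:ℝ)*θ) := by
        refine le_trans hstep2 ?_
        exact ((div_le_div_iff_of_pos_right hgnθpos).2 hstep3).trans_eq (by ring)
      gcongr
    have hgsub : ∀ x y : ℝ, g s ^ (x - y) = g s ^ x / g s ^ y :=
      fun x y => Real.rpow_sub hG x y
    have hexp2 : δ * ((n:ℝ) - p) = -γ := by rw [hγdef]; ring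
    have hmain : Dh s ≤
        ((n:ℝ) * (M*a) * 2^q * c^(θ-1)) * hfn s * g s ^ ((n:ℝ) - 2 - (n:ℝ)*θ)
          + ((n:ℝ) * (M*a) * 2^q * ((n:ℝ)*M^2)^q) * g s ^ ((n:ℝ) - 2 - (p-2)) := by
      have step : Dh s ≤ (n:ℝ) * (g s ^ ((n:ℝ)) / g s ^ ((2:ℝ))) *
          (2^q * (c^(θ-1) * hfn s / g s ^ ((n:ℝ)*θ) + ((n:ℝ)*M^2)^q / g s ^ (p-2)))
          * (M * a) := by
        have e0 : Dh s = (n:ℝ) * (g s ^ ((n:ℝ)) / g s ^ ((2:ℝ))) * E s ^ q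
            * (j (f s) * deriv j (f s)) := by
          rw [hDheq, ← hGn, ← hG2]; ring
        rw [e0]
        have hpre : (0:ℝ) ≤ (n:ℝ) * (g s ^ ((n:ℝ)) / g s ^ ((2:ℝ))) := by positivity
        calc (n:ℝ) * (g s ^ ((n:ℝ)) / g s ^ ((2:ℝ))) * E s ^ q * (j (f s) * deriv j (f s))
            ≤ (n:ℝ) * (g s ^ ((n:ℝ)) / g s ^ ((2:ℝ))) * E s ^ q * (M * a) := by
              have : (0:ℝ) ≤ (n:ℝ) * (g s ^ ((n:ℝ)) / g s ^ ((2:ℝ))) * E s ^ q := by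
                have := (Real.rpow_pos_of_pos hEv q).le
                positivity
              exact mul_le_mul_of_nonneg_left hJJ' this
          _ ≤ (n:ℝ) * (g s ^ ((n:ℝ)) / g s ^ ((2:ℝ))) *
              (2^q * (c^(θ-1) * hfn s / g s ^ ((n:ℝ)*θ) + ((n:ℝ)*M^2)^q / g s ^ (p-2)))
              * (M * a) := by
              have hma : (0:ℝ) ≤ M * a := by positivity
              exact mul_le_mul_of_nonneg_right
                (mul_le_mul_of_nonneg_left hEtot hpre) hma
      refine step.trans (le_of_eq ?_)
      rw [hgsub ((n:ℝ) - 2) ((n:ℝ)*θ), hgsub ((n:ℝ) - 2) (p-2), hgsub ((n:ℝ)) 2]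
      field_simp
    -- bound the powers of g by powers of s
    have hb1 : g s ^ ((n:ℝ) - 2 - (n:ℝ)*θ) ≤ (C₁/2)^(-μ) * s ^ (-γ) := by
      rw [hμrel]
      refine (hgpow (-μ) (by linarith)).trans ?_
      have : s ^ (δ * -μ) ≤ s ^ (-γ) :=
        Real.rpow_le_rpow_of_exponent_le hs1 (by rw [mul_neg]; exact neg_le_neg hδμ)
      exact mul_le_mul_of_nonneg_left this (Real.rpow_pos_of_pos (by linarith) _).le
    have hb2 : g s ^ ((n:ℝ) - 2 - (p-2)) ≤ (C₁/2)^((n:ℝ)-p) * s ^ (-γ) := by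
      rw [show (n:ℝ) - 2 - (p-2) = (n:ℝ) - p from by ring]
      refine (hgpow ((n:ℝ)-p) (by linarith)).trans ?_
      rw [hexp2]
    calc Dh s ≤ ((n:ℝ) * (M*a) * 2^q * c^(θ-1)) * hfn s * g s ^ ((n:ℝ) - 2 - (n:ℝ)*θ)
          + ((n:ℝ) * (M*a) * 2^q * ((n:ℝ)*M^2)^q) * g s ^ ((n:ℝ) - 2 - (p-2)) := hmain
      _ ≤ ((n:ℝ) * (M*a) * 2^q * c^(θ-1)) * hfn s * ((C₁/2)^(-μ) * s ^ (-γ))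
          + ((n:ℝ) * (M*a) * 2^q * ((n:ℝ)*M^2)^q) * ((C₁/2)^((n:ℝ)-p) * s ^ (-γ)) := by
          have hA : (0:ℝ) ≤ ((n:ℝ) * (M*a) * 2^q * c^(θ-1)) * hfn s := by positivity
          have hB' : (0:ℝ) ≤ ((n:ℝ) * (M*a) * 2^q * ((n:ℝ)*M^2)^q) := by positivity
          exact add_le_add (mul_le_mul_of_nonneg_left hb1 hA)
            (mul_le_mul_of_nonneg_left hb2 hB')
      _ = K₁ * hfn s * s ^ (-γ) + (K₂ * c) * s ^ (-γ) := by
          rw [hK₁def, hK₂def]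
          field_simp
      _ ≤ K₁ * hfn s * s ^ (-γ) + (K₂ * hfn s) * s ^ (-γ) := by
          have : K₂ * c ≤ K₂ * hfn s := mul_le_mul_of_nonneg_left hhc hK₂pos.le
          exact add_le_add_right (mul_le_mul_of_nonneg_right this hsγ.le) _
      _ = C₆ * hfn s * s ^ (-γ) := by rw [hC₆def]; ring
  
  -- Part 6 : Gronwall-type bound, hfn is bounded on [s₀, ∞)
  set K : ℝ := C₆ / (γ - 1) with hKdef
  have hKpos : 0 < K := div_pos hC₆pos (by linarith)
  set ψ : ℝ → ℝ := fun s => Real.log (hfn s) + K * s ^ (1 - γ) with hψdef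
  have hψd : ∀ x, 0 < x →
      HasDerivAt ψ ((hfn x)⁻¹ * Dh x + K * ((1-γ) * x ^ (1-γ-1))) x := by
    intro x hx
    have h1 : HasDerivAt (fun s => Real.log (hfn s)) ((hfn x)⁻¹ * Dh x) x := by
      have := (Real.hasDerivAt_log (hhpos x hx).ne').comp x (hhd x hx)
      simpa [Function.comp_def, mul_comm] using this
    have h2 : HasDerivAt (fun s : ℝ => s ^ (1-γ)) ((1-γ) * x ^ (1-γ-1)) x :=
      Real.hasDerivAt_rpow_const (Or.inl hx.ne')
    exact h1.add (h2.const_mul K)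
  have hψanti : AntitoneOn ψ (Set.Ici s₀) := by
    apply antitoneOn_of_deriv_nonpos (convex_Ici s₀)
    · exact fun x hx => ((hψd x (lt_of_lt_of_le hs₀pos hx)).continuousAt).continuousWithinAt
    · intro x hx; rw [interior_Ici] at hx
      exact ((hψd x (hs₀pos.trans hx)).differentiableAt).differentiableWithinAt
    · intro x hx; rw [interior_Ici] at hx
      have hx0 : 0 < x := hs₀pos.trans hx
      rw [(hψd x hx0).deriv]
      have hh := hhpos x hx0
      have h1 : (hfn x)⁻¹ * Dh x ≤ C₆ * x ^ (-γ) := by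
        rw [inv_mul_le_iff₀ hh]
        calc Dh x ≤ C₆ * hfn x * x ^ (-γ) := hkey x hx.le
          _ = hfn x * (C₆ * x ^ (-γ)) := by ring
      have hKC : K * (1-γ) = -C₆ := by
        have hγne : γ - 1 ≠ 0 := by
          have : (1:ℝ) < γ := hγgt1
          intro hcon; rw [sub_eq_zero] at hcon; rw [← hcon] at this; exact lt_irrefl _ this
        rw [hKdef]; field_simp; ring
      have h2 : K * ((1-γ) * x ^ (1-γ-1)) = -(C₆ * x ^ (-γ)) := by
        rw [show (1-γ-1 : ℝ) = -γ from by ring]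
        calc K * ((1-γ) * x ^ (-γ)) = (K * (1-γ)) * x ^ (-γ) := by ring
          _ = -C₆ * x ^ (-γ) := by rw [hKC]
          _ = -(C₆ * x ^ (-γ)) := by ring
      rw [h2]
      linarith
  set Bd : ℝ := Real.exp (ψ s₀) with hBddef
  have hbd : ∀ s, s₀ ≤ s → hfn s ≤ Bd := by
    intro s hs
    have hsp : 0 < s := hs₀pos.trans_le hs
    have h1 : ψ s ≤ ψ s₀ := hψanti Set.self_mem_Ici hs hs
    have h2 : Real.log (hfn s) ≤ ψ s := by
      rw [hψdef]
      have h3 : (0:ℝ) ≤ s ^ (1-γ) := Real.rpow_nonneg hsp.le _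
      have := mul_nonneg hKpos.le h3
      simp only []
      linarith
    calc hfn s = Real.exp (Real.log (hfn s)) := (Real.exp_log (hhpos s hsp)).symm
      _ ≤ Bd := Real.exp_le_exp.2 (le_trans h2 h1)
  -- Part 7 : hfn converges to a positive limit
  have hmono' : ∀ x y, s₀ ≤ x → x ≤ y → hfn x ≤ hfn y := fun x y hx hxy =>
    hhmono (by simpa using hs₀1.trans hx) (by simpa using hs₀1.trans (hx.trans hxy)) hxy
  obtain ⟨hinf, hhlim, hinfge⟩ := tendsto_of_monotoneOn_bdd hmono' hbd
  have hinfpos : 0 < hinf := lt_of_lt_of_le (hhpos s₀ hs₀pos) hinfge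
  -- Part 8 : f' · g → 0
  have hUgle : ∀ s, s₀ ≤ s → deriv f s * g s ≤
      (Bd / (((n:ℝ)*m^2)^q * (C₁/2) ^ ((n:ℝ)+1-p))) * s ^ (-(δ*((n:ℝ)+1-p))) := by
    intro s hs
    have hs1 : (1:ℝ) ≤ s := hs₀1.trans hs
    have hsp : (0:ℝ) < s := lt_of_lt_of_le one_pos hs1
    have hG := hgpos s hsp
    have hU := hf'pos s hsp
    have hEv := hEpos s hsp
    have hJm' := hJm s hs1
    have hEqpos : (0:ℝ) < E s ^ q := Real.rpow_pos_of_pos hEv q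
    have hnm2 : (0:ℝ) < ((n:ℝ)*m^2)^q := Real.rpow_pos_of_pos (by positivity) q
    have e : deriv f s * g s = hfn s / (E s ^ q * g s ^ ((n:ℝ)-1)) := by
      rw [hfneq, Real.rpow_sub hG, Real.rpow_one, ← Real.rpow_natCast (g s) n]
      have hgn : g s ^ ((n:ℝ)) ≠ 0 := (Real.rpow_pos_of_pos hG _).ne'
      field_simp
    have hEq_lb : ((n:ℝ)*m^2)^q / g s ^ (p-2) ≤ E s ^ q := by
      have h1 : (n:ℝ)*m^2/(g s)^2 ≤ E s := by
        rw [hEeq]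
        have hm2 : m^2 ≤ (j (f s))^2 := pow_le_pow_left₀ hmpos.le hJm' 2
        have h2 : (n:ℝ)*m^2/(g s)^2 ≤ (n:ℝ)*(j (f s))^2/(g s)^2 := by
          apply div_le_div_of_nonneg_right (mul_le_mul_of_nonneg_left hm2 hnpos.le)
            (by positivity)
        have h3 : (0:ℝ) ≤ (deriv f s)^2 := by positivity
        linarith
      have h2 : ((n:ℝ)*m^2/(g s)^2 : ℝ)^q ≤ E s ^ q :=
        Real.rpow_le_rpow (by positivity) h1 hqpos.le
      have e5 : ((n:ℝ)*m^2/(g s)^2 : ℝ)^q = ((n:ℝ)*m^2)^q / g s ^ (p-2) := by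
        rw [Real.div_rpow (by positivity) (by positivity)]
        congr 1
        rw [← Real.rpow_natCast (g s) 2, ← Real.rpow_mul hG.le]
        congr 1
        rw [hqdef]; ring
      rwa [e5] at h2
    have hdenlb : ((n:ℝ)*m^2)^q * g s ^ ((n:ℝ)+1-p) ≤ E s ^ q * g s ^ ((n:ℝ)-1) := by
      have e6 : g s ^ ((n:ℝ)+1-p) = g s ^ ((n:ℝ)-1) / g s ^ (p-2) := by
        rw [← Real.rpow_sub hG]
        congr 1; ring
      rw [e6]
      have hgn1 : (0:ℝ) < g s ^ ((n:ℝ)-1) := Real.rpow_pos_of_pos hG _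
      calc ((n:ℝ)*m^2)^q * (g s ^ ((n:ℝ)-1) / g s ^ (p-2))
          = (((n:ℝ)*m^2)^q / g s ^ (p-2)) * g s ^ ((n:ℝ)-1) := by ring
        _ ≤ E s ^ q * g s ^ ((n:ℝ)-1) := mul_le_mul_of_nonneg_right hEq_lb hgn1.le
    have hglb' : ((C₁/2) * s ^ δ) ^ ((n:ℝ)+1-p) ≤ g s ^ ((n:ℝ)+1-p) :=
      Real.rpow_le_rpow (by positivity) (hglb s hs) (by linarith)
    have hdenlb2 : ((n:ℝ)*m^2)^q * ((C₁/2) ^ ((n:ℝ)+1-p) * s ^ (δ*((n:ℝ)+1-p)))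
        ≤ E s ^ q * g s ^ ((n:ℝ)-1) := by
      refine le_trans ?_ hdenlb
      have e7 : ((C₁/2) * s ^ δ) ^ ((n:ℝ)+1-p)
          = (C₁/2) ^ ((n:ℝ)+1-p) * s ^ (δ*((n:ℝ)+1-p)) := by
        rw [Real.mul_rpow (by positivity) (by positivity), ← Real.rpow_mul hsp.le]
      rw [← e7]
      exact mul_le_mul_of_nonneg_left hglb' hnm2.le
    have hdpos : (0:ℝ) < ((n:ℝ)*m^2)^q * ((C₁/2) ^ ((n:ℝ)+1-p) * s ^ (δ*((n:ℝ)+1-p))) := by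
      have := Real.rpow_pos_of_pos (show (0:ℝ) < C₁/2 by linarith) ((n:ℝ)+1-p)
      have := Real.rpow_pos_of_pos hsp (δ*((n:ℝ)+1-p))
      positivity
    rw [e]
    calc hfn s / (E s ^ q * g s ^ ((n:ℝ)-1))
        ≤ hfn s / (((n:ℝ)*m^2)^q * ((C₁/2) ^ ((n:ℝ)+1-p) * s ^ (δ*((n:ℝ)+1-p)))) :=
          div_le_div_of_nonneg_left (hhpos s hsp).le hdpos hdenlb2
      _ ≤ Bd / (((n:ℝ)*m^2)^q * ((C₁/2) ^ ((n:ℝ)+1-p) * s ^ (δ*((n:ℝ)+1-p)))) :=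
          (div_le_div_iff_of_pos_right hdpos).2 (hbd s hs)
      _ = (Bd / (((n:ℝ)*m^2)^q * (C₁/2) ^ ((n:ℝ)+1-p))) * s ^ (-(δ*((n:ℝ)+1-p))) := by
          have h1 : ((n:ℝ)*m^2)^q ≠ 0 := hnm2.ne'
          have h2 : (C₁/2) ^ ((n:ℝ)+1-p) ≠ 0 :=
            (Real.rpow_pos_of_pos (show (0:ℝ) < C₁/2 by linarith) _).ne'
          have h3 : s ^ (δ*((n:ℝ)+1-p)) ≠ 0 := (Real.rpow_pos_of_pos hsp _).ne'
          rw [Real.rpow_neg hsp.le]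
          field_simp
  have hUg0 : Tendsto (fun s => deriv f s * g s) atTop (𝓝 0) := by
    have hexp : (0:ℝ) < δ*((n:ℝ)+1-p) := by
      have : (0:ℝ) < (n:ℝ)+1-p := by linarith
      positivity
    have hlim : Tendsto (fun s : ℝ =>
        (Bd / (((n:ℝ)*m^2)^q * (C₁/2) ^ ((n:ℝ)+1-p))) * s ^ (-(δ*((n:ℝ)+1-p))))
        atTop (𝓝 0) := by
      have := (tendsto_rpow_neg_atTop hexp).const_mul
        (Bd / (((n:ℝ)*m^2)^q * (C₁/2) ^ ((n:ℝ)+1-p)))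
      simpa using this
    apply tendsto_of_tendsto_of_tendsto_of_le_of_le' tendsto_const_nhds hlim
    · filter_upwards [eventually_ge_atTop s₀] with s hs
      have hsp : (0:ℝ) < s := hs₀pos.trans_le hs
      exact (mul_pos (hf'pos s hsp) (hgpos s hsp)).le
    · filter_upwards [eventually_ge_atTop s₀] with s hs
      exact hUgle s hs
  -- Part 9 : conclusion
  have hinner : Tendsto (fun s => (n:ℝ) * (j (f s))^2 + (deriv f s * g s)^2)
      atTop (𝓝 ((n:ℝ) * (j L)^2)) := by
    have h1 : Tendsto (fun s => (n:ℝ) * (j (f s))^2) atTop (𝓝 ((n:ℝ)*(j L)^2)) :=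
      (hJlim.pow 2).const_mul _
    have h2 : Tendsto (fun s => (deriv f s * g s)^2) atTop (𝓝 0) := by
      have := hUg0.pow 2
      simpa using this
    simpa using h1.add h2
  have hratio : Tendsto (fun s => (g s / (C₁ * s ^ δ)) ^ (p-2-(n:ℝ))) atTop (𝓝 1) := by
    have := hgasym.rpow_const (p := p-2-(n:ℝ)) (Or.inl one_ne_zero)
    simpa using this
  have hnjL : (0:ℝ) < (n:ℝ) * (j L)^2 := by positivity
  set D : ℝ := hinf * 1 * C₁ ^ (p-2-(n:ℝ)) * ((n:ℝ)*(j L)^2) ^ (-q) with hDdef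
  have hDpos : 0 < D := by
    have h1 : (0:ℝ) < C₁ ^ (p-2-(n:ℝ)) := Real.rpow_pos_of_pos hC₁ _
    have h2 : (0:ℝ) < ((n:ℝ)*(j L)^2) ^ (-q) := Real.rpow_pos_of_pos hnjL _
    rw [hDdef]; positivity
  refine ⟨D, hDpos, ?_⟩
  have hfinal : Tendsto (fun s => hfn s * (g s / (C₁ * s ^ δ)) ^ (p-2-(n:ℝ))
      * C₁ ^ (p-2-(n:ℝ))
      * ((n:ℝ) * (j (f s))^2 + (deriv f s * g s)^2) ^ (-q)) atTop (𝓝 D) :=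
    ((hhlim.mul hratio).mul tendsto_const_nhds).mul
      (hinner.rpow_const (Or.inl hnjL.ne'))
  refine hfinal.congr' ?_
  filter_upwards [eventually_ge_atTop s₀] with s hs
  have hs1 : (1:ℝ) ≤ s := hs₀1.trans hs
  have hsp : (0:ℝ) < s := lt_of_lt_of_le one_pos hs1
  have hG := hgpos s hsp
  have hU := hf'pos s hsp
  have hEv := hEpos s hsp
  have hsδ : (0:ℝ) < s ^ δ := Real.rpow_pos_of_pos hsp δ
  have ht : (0:ℝ) < C₁ * s ^ δ := by positivity
  have hEG : ((n:ℝ) * (j (f s))^2 + (deriv f s * g s)^2) = E s * g s ^ 2 := by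
    rw [hEeq]; field_simp; ring
  rw [hEG]
  rw [Real.mul_rpow hEv.le (by positivity : (0:ℝ) ≤ g s ^2)]
  rw [Real.div_rpow hG.le ht.le]
  rw [Real.mul_rpow hC₁.le hsδ.le]
  rw [← Real.rpow_natCast (g s) 2, ← Real.rpow_mul hG.le]
  rw [← Real.rpow_mul hsp.le]
  rw [hfneq, ← Real.rpow_natCast (g s) n]
  -- now pure rpow algebra
  have eG : g s ^ ((n:ℝ)) * g s ^ (p-2-(n:ℝ)) = g s ^ (p-2) := by
    rw [← Real.rpow_add hG]; congr 1; ring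
  have eG2 : g s ^ ((2:ℝ) * (-q)) = (g s ^ (p-2))⁻¹ := by
    rw [show (2:ℝ)*(-q) = -(p-2) from by rw [hqdef]; ring, Real.rpow_neg hG.le]
  have eE : E s ^ (-q) = (E s ^ q)⁻¹ := Real.rpow_neg hEv.le q
  have eS : s ^ (δ*((n:ℝ)-p+2)) = (s ^ (δ*(p-2-(n:ℝ))))⁻¹ := by
    rw [show δ*((n:ℝ)-p+2) = -(δ*(p-2-(n:ℝ))) from by ring, Real.rpow_neg hsp.le]
  push_cast
  rw [eG2, eE, eS]
  have hZ : g s ^ (p-2) ≠ 0 := (Real.rpow_pos_of_pos hG _).ne'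
  have hW : E s ^ q ≠ 0 := (Real.rpow_pos_of_pos hEv _).ne'
  have hV : s ^ (δ*(p-2-(n:ℝ))) ≠ 0 := (Real.rpow_pos_of_pos hsp _).ne'
  have hc1 : C₁ ^ (p-2-(n:ℝ)) ≠ 0 := (Real.rpow_pos_of_pos hC₁ _).ne'
  rw [← eG]
  field_simp
end

section
/- Let n ≥ 1 be an integer and p > 1 a real number, let g, j be differentiable on (0,∞), and let f be a twice continuously differentiable solution of the rotationally symmetric p-harmonic equation such that g(s) > 0, j(f(s)) > 0 and f'(s) > 0 for all s > 0. Then for every s > 0 the function Φ(s) := g(s)ⁿ·E(s)^{(p−2)/2}·f'(s) is differentiable with Φ'(s) = n·E(s)^{(p−2)/2}·g(s)^{n−2}·j(f(s))·j'(f(s)). In particular, if j'(f(s)) ≥ 0 for all s > 0, then Φ is non-decreasing on (0,∞). -/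
open Real Filter Topology

lemma key (a b G G' Gm J J' Es X q N : ℝ) (hG : G ≠ 0) (hEs : Es ≠ 0)
    (heq : b + (N / G^2) * (G*G'*a - J*J') + (2*q) * Es⁻¹ * a *
      (a*b + N * (J/G^3) * (J'*a*G - J*G')) = 0) :
    (N * Gm * G' * (X*Es) + (Gm*G) * (q * X *
        (2*a*b + (N*(2*J*(J'*a))*G^2 - N*J^2*(2*G*G'))/(G^2)^2))) * a
      + ((Gm*G) * (X*Es)) * b
    = N * (X*Es) * ((Gm*G)/G^2) * J * J' := by
  field_simp at heq ⊢
  linear_combination (Gm*X) * heq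

/-- The quantity `Φ(s) = gⁿ(s) · |dF|^{p-2}(s) · f'(s)` satisfies
`Φ'(s) = n · |dF|^{p-2}(s) · g^{n-2}(s) · j(f(s)) · j'(f(s))`; in particular `Φ` is
non-decreasing whenever `j'(f(s)) ≥ 0`. -/
theorem monotone_quantity (n : ℕ) (p : ℝ) (g j f : ℝ → ℝ)
    (hn : 1 ≤ n) (hp : 1 < p)
    (hg : ∀ s > (0:ℝ), DifferentiableAt ℝ g s)
    (hj : ∀ t > (0:ℝ), DifferentiableAt ℝ j t)
    (hjf : ∀ s > (0:ℝ), DifferentiableAt ℝ j (f s))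
    (hf : ContDiffOn ℝ 2 f (Set.Ici 0))
    (hsol : SolvesPHarmonic n p g j f)
    (hgpos : ∀ s > (0:ℝ), 0 < g s)
    (hjfpos : ∀ s > (0:ℝ), 0 < j (f s))
    (hf'pos : ∀ s > (0:ℝ), 0 < deriv f s) :
    (∀ s > (0:ℝ),
      HasDerivAt (fun x : ℝ => g x ^ n * (energyDensitySq n g j f x) ^ ((p - 2) / 2) * deriv f x)
        ((n : ℝ) * (energyDensitySq n g j f s) ^ ((p - 2) / 2) * g s ^ ((n : ℝ) - 2)
          * j (f s) * deriv j (f s)) s) ∧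
    ((∀ s > (0:ℝ), 0 ≤ deriv j (f s)) →
      MonotoneOn (fun x : ℝ => g x ^ n * (energyDensitySq n g j f x) ^ ((p - 2) / 2) * deriv f x)
        (Set.Ioi 0)) := by
  have hE0 : ∀ s > (0:ℝ), 0 < energyDensitySq n g j f s := by
    intro s hs
    have h1 := hf'pos s hs
    have h2 := hgpos s hs
    have h3 := hjfpos s hs
    unfold energyDensitySq
    positivity
  have hfO : ContDiffOn ℝ (1+1 : WithTop ℕ∞) f (Set.Ioi 0) := by
    have : ((1+1 : WithTop ℕ∞)) = 2 := by norm_num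
    rw [this]
    exact hf.mono Set.Ioi_subset_Ici_self
  have hder := (contDiffOn_succ_iff_deriv_of_isOpen isOpen_Ioi).mp hfO
  have main : ∀ s > (0:ℝ),
      HasDerivAt (fun x : ℝ => g x ^ n * (energyDensitySq n g j f x) ^ ((p - 2) / 2) * deriv f x)
        ((n : ℝ) * (energyDensitySq n g j f s) ^ ((p - 2) / 2) * g s ^ ((n : ℝ) - 2)
          * j (f s) * deriv j (f s)) s := by
    intro s hs
    have hG : 0 < g s := hgpos s hs
    have hEpos := hE0 s hs
    have hf1 : HasDerivAt f (deriv f s) s :=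
      (hder.1.differentiableAt (Ioi_mem_nhds hs)).hasDerivAt
    have hf2 : HasDerivAt (deriv f) (deriv (deriv f) s) s :=
      (((hder.2.2).differentiableOn one_ne_zero).differentiableAt (Ioi_mem_nhds hs)).hasDerivAt
    have hgd : HasDerivAt g (deriv g s) s := (hg s hs).hasDerivAt
    have hjc : HasDerivAt (fun x => j (f x)) (deriv j (f s) * deriv f s) s :=
      ((hjf s hs).hasDerivAt).comp s hf1
    have hE : HasDerivAt (fun x => energyDensitySq n g j f x)
        (2 * deriv f s ^ (2-1) * deriv (deriv f) s
          + (((n:ℝ) * (2 * j (f s) ^ (2-1) * (deriv j (f s) * deriv f s))) * g s ^ 2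
              - (n:ℝ) * j (f s) ^ 2 * (2 * g s ^ (2-1) * deriv g s)) / (g s ^ 2) ^ 2) s := by
      have h1 := hf2.pow 2
      have h2 := ((hjc.pow 2).const_mul (n:ℝ)).div (hgd.pow 2) (pow_ne_zero 2 hG.ne')
      exact h1.add h2
    have hrpow := hE.rpow_const (p := (p-2)/2) (Or.inl hEpos.ne')
    have hgn := hgd.fun_pow n
    have hΦ := (hgn.fun_mul hrpow).fun_mul hf2
    refine hΦ.congr_deriv ?_
    symm
    have hEr : energyDensitySq n g j f s ^ ((p-2)/2)
        = energyDensitySq n g j f s ^ ((p-2)/2 - 1) * energyDensitySq n g j f s := by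
      rw [Real.rpow_sub_one hEpos.ne', div_mul_cancel₀ _ hEpos.ne']
    have hgr : g s ^ ((n:ℝ) - 2) = g s ^ n / g s ^ 2 := by
      rw [Real.rpow_sub hG, Real.rpow_natCast,
        show ((2:ℝ)) = ((2:ℕ):ℝ) by norm_num, Real.rpow_natCast]
    have hGr : g s ^ n = g s ^ (n-1) * g s := by
      conv_lhs => rw [← Nat.sub_add_cancel hn, pow_succ]
    have heq := hsol s hs hEpos
    have heq' : deriv (deriv f) s
        + ((n:ℝ) / (g s)^2) * (g s * deriv g s * deriv f s - j (f s) * deriv j (f s))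
        + (2 * ((p-2)/2)) * (energyDensitySq n g j f s)⁻¹ * deriv f s *
          (deriv f s * deriv (deriv f) s
            + (n:ℝ) * (j (f s) / (g s)^3) *
              (deriv j (f s) * deriv f s * g s - j (f s) * deriv g s)) = 0 := by
      rw [show (2:ℝ) * ((p-2)/2) = p - 2 by ring]; exact heq
    rw [hEr, hgr, hGr]
    linear_combination (key (deriv f s) (deriv (deriv f) s) (g s) (deriv g s)
      (g s ^ (n-1)) (j (f s)) (deriv j (f s)) (energyDensitySq n g j f s)
      (energyDensitySq n g j f s ^ ((p-2)/2 - 1)) ((p-2)/2) (n:ℝ)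
      hG.ne' hEpos.ne' heq').symm
  refine ⟨main, fun hj' => ?_⟩
  apply monotoneOn_of_deriv_nonneg (convex_Ioi 0)
  · intro x hx
    exact ((main x hx).differentiableAt).continuousAt.continuousWithinAt
  · rw [interior_Ioi]
    intro x hx
    exact ((main x hx).differentiableAt).differentiableWithinAt
  · rw [interior_Ioi]
    intro x hx
    rw [(main x hx).deriv]
    have h1 : (0:ℝ) ≤ (n:ℝ) := Nat.cast_nonneg n
    have h2 : (0:ℝ) ≤ energyDensitySq n g j f x ^ ((p-2)/2) :=
      Real.rpow_nonneg (hE0 x hx).le _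
    have h3 : (0:ℝ) ≤ g x ^ ((n:ℝ) - 2) := Real.rpow_nonneg (hgpos x hx).le _
    exact mul_nonneg (mul_nonneg (mul_nonneg (mul_nonneg h1 h2) h3)
      (hjfpos x hx).le) (hj' x hx)
end

section
/- Under hypotheses (H), the limit P := lim_{s→∞} g(s)ⁿ·E(s)^{(p−2)/2}·f'(s) exists and satisfies 0 < P < +∞. Consequently f'(s) is asymptotically equivalent to P·E(s)^{(2−p)/2}·g(s)^{−n} as s → +∞, i.e. lim_{s→∞} f'(s)·E(s)^{(p−2)/2}·g(s)ⁿ/P = 1. -/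
open Real Filter Topology

lemma rpow_add_le' (x y c : ℝ) (hx : 0 ≤ x) (hy : 0 ≤ y) (hc : 0 ≤ c) :
    (x + y) ^ c ≤ 2 ^ c * (x ^ c + y ^ c) := by
  have h1 : x + y ≤ 2 * max x y := by
    rcases le_total x y with h | h
    · simp [max_eq_right h]; linarith
    · simp [max_eq_left h]; linarith
  calc (x + y) ^ c ≤ (2 * max x y) ^ c := Real.rpow_le_rpow (by linarith) h1 hc
    _ = 2 ^ c * (max x y) ^ c := Real.mul_rpow (by norm_num) (le_max_of_le_left hx)
    _ ≤ 2 ^ c * (x ^ c + y ^ c) := by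
        gcongr
        rcases le_total x y with h | h
        · rw [max_eq_right h]
          nlinarith [Real.rpow_nonneg hx c, Real.rpow_nonneg hy c]
        · rw [max_eq_left h]
          nlinarith [Real.rpow_nonneg hx c, Real.rpow_nonneg hy c]

private lemma qderiv_algebra (N p al G G' F' F'' J J' e A GN : ℝ) (hG : G ≠ 0) (he : e ≠ 0)
    (hal : al = (p-2)/2)
    (ode : F'' + (N / G^2) * (G*G'*F' - J*J')
      + (p-2) * e⁻¹ * F' * (F'*F'' + N * (J/G^3) * (J'*F'*G - J*G')) = 0) :
    ((N * (GN / G) * G') * A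
        + GN * ((2*F'*F'' + ((N*(2*J*(J'*F')))*G^2 - (N*J^2)*(2*G*G'))/(G^2)^2) * al * (A/e))) * F'
      + GN * A * F''
      = N * GN / G^2 * (J*J') * A := by
  subst hal
  field_simp at ode ⊢
  linear_combination (GN * A) * ode


set_option maxHeartbeats 2000000 in
/-- Under hypotheses (H), the limit `P = lim_{s→∞} gⁿ(s)·|dF|^{p-2}(s)·f'(s)` exists, is
finite and positive; consequently `f'(s) ~ P · |dF|^{2-p}(s) · g⁻ⁿ(s)` as `s → +∞`. -/
theorem finite_positive_limit (n : ℕ) (p a C₁ δ : ℝ) (g j f : ℝ → ℝ)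
    (hn : 2 ≤ n) (hp₁ : max 2 (n : ℝ) < p) (hp₂ : p < (n : ℝ) + 1)
    (ha : 0 < a) (hC₁ : 0 < C₁) (hδ : (p - (n : ℝ))⁻¹ < δ)
    (hg : ContDiffOn ℝ 1 g (Set.Ioi 0)) (hj : ContDiffOn ℝ 1 j (Set.Ioi 0))
    (hg0 : g 0 = 0) (hj0 : j 0 = 0)
    (hg'0 : HasDerivWithinAt g 1 (Set.Ici 0) 0) (hj'0 : HasDerivWithinAt j 1 (Set.Ici 0) 0)
    (hgpos : ∀ s > (0:ℝ), 0 < g s) (hjpos : ∀ t > (0:ℝ), 0 < j t)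
    (hj' : ∀ t > (0:ℝ), 0 < deriv j t ∧ deriv j t ≤ a)
    (hg' : ∀ᶠ s in atTop, 0 < deriv g s)
    (hgasym : Tendsto (fun s => g s / (C₁ * s ^ δ)) atTop (𝓝 1))
    (hf : ContDiffOn ℝ 2 f (Set.Ici 0))
    (hfbdd : ∃ B, ∀ s ≥ (0:ℝ), |f s| ≤ B)
    (hf0 : f 0 = 0)
    (hfpos : ∀ s > (0:ℝ), 0 < f s) (hf'pos : ∀ s > (0:ℝ), 0 < deriv f s)
    (hsol : SolvesPHarmonic n p g j f) :
    ∃ P : ℝ, 0 < P ∧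
      Tendsto (fun s : ℝ => g s ^ n * (energyDensitySq n g j f s) ^ ((p - 2) / 2) * deriv f s)
        atTop (𝓝 P) ∧
      Tendsto (fun s : ℝ => deriv f s * (energyDensitySq n g j f s) ^ ((p - 2) / 2) * g s ^ n / P)
        atTop (𝓝 1) := by
  -- basic numeric facts
  have hp2 : (2:ℝ) < p := lt_of_le_of_lt (le_max_left _ _) hp₁
  have hpn : (n:ℝ) < p := lt_of_le_of_lt (le_max_right _ _) hp₁
  have hpn' : (0:ℝ) < p - n := by linarith
  have hp1 : (0:ℝ) < p - 1 := by linarith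
  have hδ0 : 0 < δ := lt_trans (by positivity) hδ
  have hδ1 : 1 < δ * (p - n) := by
    have h := mul_lt_mul_of_pos_right hδ hpn'
    rwa [inv_mul_cancel₀ hpn'.ne'] at h
  have hδgt1 : 1 < δ := by nlinarith [hδ1, hpn', hp₂]
  set α := (p - 2) / 2 with hα
  set β := (p - 2) / (p - 1) with hβ
  clear_value α β
  have hα0 : 0 < α := by rw [hα]; linarith
  have hβ0 : 0 < β := by rw [hβ]; exact div_pos (by linarith) hp1
  have hβ1 : β < 1 := by rw [hβ, div_lt_one hp1]; linarith
  have hβrel : β * (p - 1) = p - 2 := by rw [hβ]; field_simp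
  have h1β : 0 < 1 - β := by linarith
  set μ := (n : ℝ) - 2 - (n : ℝ) * β with hμdef
  set ν := (n : ℝ) - p with hνdef
  clear_value μ ν
  have hμp : μ * (p - 1) = (n:ℝ) + 2 - 2*p := by
    rw [hμdef]; linear_combination (-(n:ℝ)) * hβrel
  have hμ : δ * μ < -1 := by
    have key : p - 1 < δ * (p - n) + δ * (p - 2) := by nlinarith [hδ1, hδgt1, hp2]
    nlinarith [key, hμp, hp1, hδ0]
  have hμ0 : μ < 0 := by nlinarith [hμ, hδ0]
  have hν : δ * ν < -1 := by rw [hνdef]; linarith [hδ1]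
  have hν0 : ν < 0 := by nlinarith [hν, hδ0]
  set E := energyDensitySq n g j f with hE
  set Q := fun s : ℝ => g s ^ n * E s ^ α * deriv f s with hQ
  clear_value E Q
  -- differentiability infrastructure
  have hfd : ∀ s : ℝ, 0 < s → HasDerivAt f (deriv f s) s := by
    intro s hs
    exact ((hf.mono Set.Ioi_subset_Ici_self).differentiableOn (by norm_num)).differentiableAt
      (Ioi_mem_nhds hs) |>.hasDerivAt
  have hf2d : ∀ s : ℝ, 0 < s → HasDerivAt (deriv f) (deriv (deriv f) s) s := by
    intro s hs
    have h2 : ContDiffOn ℝ 1 (deriv f) (Set.Ioi 0) :=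
      (hf.mono Set.Ioi_subset_Ici_self).deriv_of_isOpen isOpen_Ioi (by norm_num)
    exact ((h2.differentiableOn one_ne_zero).differentiableAt (Ioi_mem_nhds hs)).hasDerivAt
  have hgd : ∀ s : ℝ, 0 < s → HasDerivAt g (deriv g s) s := by
    intro s hs
    exact ((hg.differentiableOn one_ne_zero).differentiableAt (Ioi_mem_nhds hs)).hasDerivAt
  have hjd : ∀ t : ℝ, 0 < t → HasDerivAt j (deriv j t) t := by
    intro t ht
    exact ((hj.differentiableOn one_ne_zero).differentiableAt (Ioi_mem_nhds ht)).hasDerivAt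
  have hEpos : ∀ s : ℝ, 0 < s → 0 < E s := by
    intro s hs
    have h1 := hf'pos s hs
    have h2 : 0 ≤ (n:ℝ) * (j (f s)) ^ 2 / (g s) ^ 2 := by positivity
    have h3 : 0 < (deriv f s)^2 := pow_pos h1 2
    rw [hE]; unfold energyDensitySq; linarith
  -- derivative of E
  have hEd : ∀ s : ℝ, 0 < s → HasDerivAt E
      (2 * deriv f s * deriv (deriv f) s +
        (((n:ℝ) * (2 * j (f s) * (deriv j (f s) * deriv f s))) * (g s)^2
          - ((n:ℝ) * (j (f s))^2) * (2 * g s * deriv g s)) / ((g s)^2)^2) s := by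
    intro s hs
    have hjf : HasDerivAt (fun s => j (f s)) (deriv j (f s) * deriv f s) s :=
      (hjd (f s) (hfpos s hs)).comp s (hfd s hs)
    have t1 : HasDerivAt (fun s => (deriv f s)^2) (2 * deriv f s * deriv (deriv f) s) s := by
      have := (hf2d s hs).fun_pow 2
      simpa using this
    have t2 : HasDerivAt (fun s => (n:ℝ) * (j (f s))^2)
        ((n:ℝ) * (2 * j (f s) * (deriv j (f s) * deriv f s))) s := by
      have := (hjf.fun_pow 2).const_mul (n:ℝ)
      simpa [mul_comm, mul_assoc, mul_left_comm] using this
    have t3 : HasDerivAt (fun s => (g s)^2) (2 * g s * deriv g s) s := by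
      have := (hgd s hs).fun_pow 2
      simpa using this
    have hg2 : ((g s)^2 : ℝ) ≠ 0 := pow_ne_zero _ (hgpos s hs).ne'
    have t4 := t2.div t3 hg2
    rw [hE]; unfold energyDensitySq
    exact t1.add t4
  -- derivative of Q
  have hQd : ∀ s : ℝ, 0 < s → HasDerivAt Q
      ((n:ℝ) * g s ^ n / (g s)^2 * (j (f s) * deriv j (f s)) * E s ^ α) s := by
    intro s hs
    have hG := hgpos s hs
    have hEp := hEpos s hs
    have h1 : HasDerivAt (fun t => g t ^ n) ((n:ℝ) * (g s ^ n / g s) * deriv g s) s := by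
      have h := (hgd s hs).fun_pow n
      have hpow : g s ^ (n - 1) = g s ^ n / g s := by
        rw [eq_div_iff hG.ne', ← pow_succ]; congr 1; omega
      rwa [hpow] at h
    have h2 : HasDerivAt (fun t => E t ^ α)
        ((2 * deriv f s * deriv (deriv f) s +
          (((n:ℝ) * (2 * j (f s) * (deriv j (f s) * deriv f s))) * (g s)^2
            - ((n:ℝ) * (j (f s))^2) * (2 * g s * deriv g s)) / ((g s)^2)^2)
          * α * (E s ^ α / E s)) s := by
      have h := (hEd s hs).rpow_const (p := α) (Or.inl hEp.ne')
      have hsub : E s ^ (α - 1) = E s ^ α / E s := by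
        rw [show α - 1 = α + (-1) from by ring, Real.rpow_add hEp, Real.rpow_neg_one,
          div_eq_mul_inv]
      rwa [hsub] at h
    have h3 := (h1.mul h2).mul (hf2d s hs)
    have hEp' : 0 < energyDensitySq n g j f s := by rw [← hE]; exact hEp
    have ode := hsol s hs hEp' 
    simp only [← hE] at ode
    have heq := qderiv_algebra (n:ℝ) p α (g s) (deriv g s) (deriv f s) (deriv (deriv f) s)
      (j (f s)) (deriv j (f s)) (E s) (E s ^ α) (g s ^ n) hG.ne' hEp.ne' hα ode
    rw [hQ, ← heq]
    exact h3
  have hQpos : ∀ s : ℝ, 0 < s → 0 < Q s := by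
    intro s hs
    have := hgpos s hs; have := hf'pos s hs; have := hEpos s hs
    rw [hQ]; dsimp only
    have : (0:ℝ) < E s ^ α := Real.rpow_pos_of_pos (hEpos s hs) α
    positivity
  have hQmono : StrictMonoOn Q (Set.Ioi 0) := by
    apply strictMonoOn_of_deriv_pos (convex_Ioi 0)
    · intro x hx
      exact ((hQd x hx).differentiableAt).continuousAt.continuousWithinAt
    · intro x hx
      rw [interior_Ioi] at hx
      rw [(hQd x hx).deriv]
      have h1 := hgpos x hx
      have h2 := hjpos (f x) (hfpos x hx)
      have h3 := (hj' (f x) (hfpos x hx)).1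
      have h4 : (0:ℝ) < E x ^ α := Real.rpow_pos_of_pos (hEpos x hx) α
      have hn0 : (0:ℝ) < n := by positivity
      positivity
  -- bound on j(f s)
  obtain ⟨B, hB⟩ := hfbdd
  have hB0 : 0 < B := lt_of_lt_of_le (hfpos 1 one_pos) ((abs_le.mp (hB 1 (by norm_num))).2)
  have hfB : ∀ s : ℝ, 0 < s → f s ≤ B := fun s hs => (abs_le.mp (hB s hs.le)).2
  have hjmono : MonotoneOn j (Set.Ioi 0) := by
    apply (strictMonoOn_of_deriv_pos (convex_Ioi 0) (hj.continuousOn) ?_).monotoneOn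
    intro x hx
    rw [interior_Ioi] at hx
    exact (hj' x hx).1
  set J₀ := j B with hJ₀
  clear_value J₀
  have hJ₀pos : 0 < J₀ := by rw [hJ₀]; exact hjpos B hB0
  have hjfB : ∀ s : ℝ, 0 < s → j (f s) ≤ J₀ := by
    intro s hs
    rw [hJ₀]
    exact hjmono (hfpos s hs) hB0 (hfB s hs)
  -- eventual lower bound on g
  have hglb : ∀ᶠ s in atTop, C₁ / 2 * s ^ δ ≤ g s := by
    have h := hgasym.eventually (eventually_gt_nhds (show (1:ℝ)/2 < 1 by norm_num))
    filter_upwards [h, eventually_gt_atTop (0:ℝ)] with s h1 h2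
    have hd : 0 < C₁ * s ^ δ := by positivity
    rw [lt_div_iff₀ hd] at h1
    linarith [h1]
  -- constants for the key differential inequality
  set C₂ := (n:ℝ) * J₀^2 with hC₂
  set K₁ := (n:ℝ) * J₀ * a * 2 ^ α * (C₁/2) ^ μ with hK₁
  set K₂ := (n:ℝ) * J₀ * a * 2 ^ α * C₂ ^ α * (C₁/2) ^ ν with hK₂
  clear_value C₂ K₁ K₂
  have hK₁pos : 0 < K₁ := by
    rw [hK₁]
    have : (0:ℝ) < (C₁/2) ^ μ := Real.rpow_pos_of_pos (by linarith) μ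
    have h2 : (0:ℝ) < (2:ℝ) ^ α := Real.rpow_pos_of_pos (by norm_num) α
    have hn0 : (0:ℝ) < n := by positivity
    positivity
  have hK₂pos : 0 < K₂ := by
    rw [hK₂]
    have : (0:ℝ) < (C₁/2) ^ ν := Real.rpow_pos_of_pos (by linarith) ν
    have h2 : (0:ℝ) < (2:ℝ) ^ α := Real.rpow_pos_of_pos (by norm_num) α
    have h3 : (0:ℝ) < C₂ ^ α := Real.rpow_pos_of_pos (by rw [hC₂]; positivity) α
    have hn0 : (0:ℝ) < n := by positivity
    positivity
  -- key differential inequality, eventually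
  have hkey : ∀ᶠ s in atTop, (n:ℝ) * g s ^ n / (g s)^2 * (j (f s) * deriv j (f s)) * E s ^ α
      ≤ (Q s + 1) ^ β * (K₁ * s ^ (δ * μ) + K₂ * s ^ (δ * ν)) := by
    filter_upwards [hglb, eventually_ge_atTop (1:ℝ)] with s hgl hs1
    have hs : (0:ℝ) < s := lt_of_lt_of_le one_pos hs1
    have hG := hgpos s hs
    have hF' := hf'pos s hs
    have hEp := hEpos s hs
    have hfps := hfpos s hs
    have hJf := hjpos (f s) hfps
    have hJ'p := (hj' (f s) hfps).1
    have hJ'a := (hj' (f s) hfps).2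
    have hjfs := hjfB s hs
    have hsδ : (0:ℝ) < s ^ δ := Real.rpow_pos_of_pos hs δ
    have hq0 := hQpos s hs
    have hcu : (0:ℝ) < C₁ / 2 * s ^ δ := by positivity
    have hC₂0 : (0:ℝ) < C₂ := by rw [hC₂]; positivity
    -- convert nat powers of g to rpow
    have hg2 : g s ^ n / (g s)^2 = g s ^ ((n:ℝ) - 2) := by
      rw [Real.rpow_sub hG, Real.rpow_natCast, Real.rpow_two]
    -- upper bound on E
    have hEub : E s ≤ (deriv f s)^2 + C₂ / (g s)^2 := by
      rw [hE, hC₂]; unfold energyDensitySq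
      have h2 : j (f s)^2 ≤ J₀^2 := pow_le_pow_left₀ hJf.le hjfs 2
      have key : 0 ≤ (n:ℝ) * (J₀^2 - j (f s)^2) * ((g s)^2)⁻¹ :=
        mul_nonneg (mul_nonneg (by positivity) (by linarith [h2])) (by positivity)
      have hgne : ((g s)^2 : ℝ) ≠ 0 := by positivity
      rw [div_eq_mul_inv, div_eq_mul_inv]
      linarith [key]
    -- rewriting of squares as rpow
    have e1 : ((deriv f s)^2 : ℝ)^α = (deriv f s)^(p-2) := by
      have h2 : (2:ℝ) * α = p - 2 := by rw [hα]; ring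
      rw [← Real.rpow_two, ← Real.rpow_mul hF'.le, h2]
    have e2 : ((g s)^2 : ℝ)^α = (g s)^(p-2) := by
      have h2 : (2:ℝ) * α = p - 2 := by rw [hα]; ring
      rw [← Real.rpow_two, ← Real.rpow_mul hG.le, h2]
    -- step B
    have hEα : E s ^ α ≤ 2^α * ((deriv f s)^(p-2) + C₂^α / (g s)^(p-2)) := by
      calc E s ^ α ≤ ((deriv f s)^2 + C₂/(g s)^2) ^ α :=
            Real.rpow_le_rpow hEp.le hEub hα0.le
        _ ≤ 2^α * (((deriv f s)^2)^α + (C₂/(g s)^2)^α) :=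
            rpow_add_le' _ _ _ (by positivity) (by positivity) hα0.le
        _ = 2^α * ((deriv f s)^(p-2) + C₂^α / (g s)^(p-2)) := by
            rw [e1, Real.div_rpow hC₂0.le (by positivity), e2]
    -- step C : f' bound via Q
    have hQge : g s ^ ((n:ℝ)) * (deriv f s)^(p-1) ≤ Q s := by
      have hE2 : (deriv f s)^2 ≤ E s := by
        rw [hE]; unfold energyDensitySq
        have : (0:ℝ) ≤ (n:ℝ) * j (f s) ^ 2 / g s ^ 2 := by positivity
        linarith
      have h3 : (deriv f s)^(p-2) ≤ E s ^ α := by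
        rw [← e1]; exact Real.rpow_le_rpow (by positivity) hE2 hα0.le
      have h4 : (deriv f s)^(p-1) = (deriv f s)^(p-2) * deriv f s := by
        rw [show p-1 = (p-2)+1 from by ring, Real.rpow_add_one hF'.ne']
      rw [hQ]; dsimp only
      rw [h4, Real.rpow_natCast]
      calc g s ^ n * ((deriv f s)^(p-2) * deriv f s)
          = g s ^ n * (deriv f s)^(p-2) * deriv f s := by ring
        _ ≤ g s ^ n * E s ^ α * deriv f s := by gcongr
    have hgnr : (0:ℝ) < g s ^ ((n:ℝ)) := Real.rpow_pos_of_pos hG _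
    have hf'ub : (deriv f s)^(p-2) ≤ (Q s / g s ^ ((n:ℝ)))^β := by
      have h5 : (deriv f s)^(p-1) ≤ Q s / g s ^ ((n:ℝ)) := by
        rw [le_div_iff₀ hgnr]; linarith [hQge]
      have h6 : ((deriv f s)^(p-1))^β = (deriv f s)^(p-2) := by
        rw [← Real.rpow_mul hF'.le]
        congr 1
        linarith [hβrel]
      rw [← h6]
      exact Real.rpow_le_rpow (by positivity) h5 hβ0.le
    -- term 1
    have hterm1 : g s ^ ((n:ℝ)-2) * (deriv f s)^(p-2)
        ≤ (Q s + 1)^β * ((C₁/2)^μ * s^(δ*μ)) := by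
      have h7 : (Q s / g s ^ ((n:ℝ)))^β = Q s ^ β / g s ^ ((n:ℝ)*β) := by
        rw [Real.div_rpow hq0.le hgnr.le, ← Real.rpow_mul hG.le]
      have h8 : g s ^ ((n:ℝ)-2) * (Q s ^ β / g s ^ ((n:ℝ)*β)) = Q s ^ β * g s ^ μ := by
        have h9 : g s ^ ((n:ℝ)-2) = g s ^ μ * g s ^ ((n:ℝ)*β) := by
          rw [← Real.rpow_add hG]; congr 1; rw [hμdef]; ring
        have hb : g s ^ ((n:ℝ)*β) ≠ 0 := (Real.rpow_pos_of_pos hG _).ne'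
        rw [h9]; field_simp
      have hA : Q s ^ β ≤ (Q s + 1)^β := Real.rpow_le_rpow hq0.le (by linarith) hβ0.le
      have hBB : g s ^ μ ≤ (C₁/2 * s^δ) ^ μ :=
        Real.rpow_le_rpow_of_nonpos hcu hgl hμ0.le
      calc g s ^ ((n:ℝ)-2) * (deriv f s)^(p-2)
          ≤ g s ^ ((n:ℝ)-2) * (Q s / g s ^ ((n:ℝ)))^β := by
            gcongr
        _ = Q s ^ β * g s ^ μ := by rw [h7, h8]
        _ ≤ (Q s + 1)^β * ((C₁/2 * s^δ) ^ μ) :=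
            mul_le_mul hA hBB (Real.rpow_nonneg hG.le _) (Real.rpow_nonneg (by linarith) _)
        _ = (Q s + 1)^β * ((C₁/2)^μ * s^(δ*μ)) := by
            rw [Real.mul_rpow (by linarith) hsδ.le, ← Real.rpow_mul hs.le]
    -- term 2
    have hterm2 : g s ^ ((n:ℝ)-2) * (C₂^α / (g s)^(p-2))
        ≤ (Q s + 1)^β * (C₂^α * ((C₁/2)^ν * s^(δ*ν))) := by
      have h10 : g s ^ ((n:ℝ)-2) * (C₂^α / (g s)^(p-2)) = C₂^α * g s ^ ν := by
        have h9 : g s ^ ((n:ℝ)-2) = g s ^ ν * g s ^ (p-2) := by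
          rw [← Real.rpow_add hG]; congr 1; rw [hνdef]; ring
        have hb : g s ^ (p-2) ≠ 0 := (Real.rpow_pos_of_pos hG _).ne'
        rw [h9]; field_simp
      have hBB : g s ^ ν ≤ (C₁/2 * s^δ) ^ ν :=
        Real.rpow_le_rpow_of_nonpos hcu hgl hν0.le
      have hone : (1:ℝ) ≤ (Q s + 1)^β := Real.one_le_rpow (by linarith) hβ0.le
      have hC₂α : (0:ℝ) < C₂ ^ α := Real.rpow_pos_of_pos hC₂0 _
      calc g s ^ ((n:ℝ)-2) * (C₂^α / (g s)^(p-2)) = C₂^α * g s ^ ν := h10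
        _ ≤ C₂^α * ((C₁/2 * s^δ) ^ ν) := mul_le_mul_of_nonneg_left hBB hC₂α.le
        _ = C₂^α * ((C₁/2)^ν * s^(δ*ν)) := by
            rw [Real.mul_rpow (by linarith) hsδ.le, ← Real.rpow_mul hs.le]
        _ ≤ (Q s + 1)^β * (C₂^α * ((C₁/2)^ν * s^(δ*ν))) := by
            have hrhs : (0:ℝ) ≤ C₂^α * ((C₁/2)^ν * s^(δ*ν)) := by
              have h11 := Real.rpow_nonneg (show (0:ℝ) ≤ C₁/2 by linarith) ν
              have h12 := Real.rpow_nonneg hs.le (δ*ν)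
              positivity
            exact le_mul_of_one_le_left hrhs hone
    -- assemble
    have hJJ : j (f s) * deriv j (f s) ≤ J₀ * a :=
      mul_le_mul hjfs hJ'a hJ'p.le hJ₀pos.le
    have hgn2 : (0:ℝ) ≤ g s ^ n / (g s)^2 := by positivity
    have hEα0 : (0:ℝ) ≤ E s ^ α := Real.rpow_nonneg hEp.le _
    calc (n:ℝ) * g s ^ n / (g s)^2 * (j (f s) * deriv j (f s)) * E s ^ α
        ≤ (n:ℝ) * g s ^ n / (g s)^2 * (J₀ * a) * E s ^ α := by
          have hnn : (0:ℝ) ≤ (n:ℝ) * g s ^ n / (g s)^2 := by positivity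
          gcongr
        _ = ((n:ℝ) * (J₀ * a)) * (g s ^ ((n:ℝ)-2) * E s ^ α) := by
          rw [← hg2]; ring
        _ ≤ ((n:ℝ) * (J₀ * a)) * (g s ^ ((n:ℝ)-2) *
              (2^α * ((deriv f s)^(p-2) + C₂^α / (g s)^(p-2)))) := by
          have hnn : (0:ℝ) ≤ (n:ℝ) * (J₀ * a) := by positivity
          have hgg : (0:ℝ) ≤ g s ^ ((n:ℝ)-2) := Real.rpow_nonneg hG.le _
          gcongr
        _ = ((n:ℝ) * J₀ * a * 2^α) * (g s ^ ((n:ℝ)-2) * (deriv f s)^(p-2))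
            + ((n:ℝ) * J₀ * a * 2^α) * (g s ^ ((n:ℝ)-2) * (C₂^α / (g s)^(p-2))) := by
          ring
        _ ≤ ((n:ℝ) * J₀ * a * 2^α) * ((Q s + 1)^β * ((C₁/2)^μ * s^(δ*μ)))
            + ((n:ℝ) * J₀ * a * 2^α) * ((Q s + 1)^β * (C₂^α * ((C₁/2)^ν * s^(δ*ν)))) := by
          have hnn : (0:ℝ) ≤ (n:ℝ) * J₀ * a * 2^α := by
            have : (0:ℝ) ≤ (2:ℝ)^α := Real.rpow_nonneg (by norm_num) _
            positivity
          gcongr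
        _ = (Q s + 1) ^ β * (K₁ * s ^ (δ * μ) + K₂ * s ^ (δ * ν)) := by
          rw [hK₁, hK₂]; ring
  -- comparison function W and boundedness of Q
  have hQbdd : ∃ M, ∀ᶠ s in atTop, Q s ≤ M := by
    rw [eventually_atTop] at hkey
    obtain ⟨s₀, hs₀⟩ := hkey
    set s₂ := max s₀ 1 with hs₂def
    have hs₂1 : (1:ℝ) ≤ s₂ := le_max_right _ _
    have hs₂0 : (0:ℝ) < s₂ := lt_of_lt_of_le one_pos hs₂1
    have hμ1 : δ*μ+1 < 0 := by linarith
    have hν1 : δ*ν+1 < 0 := by linarith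
    set c₁ := (1-β)*K₁/(-(δ*μ+1)) with hc₁def
    set c₂ := (1-β)*K₂/(-(δ*ν+1)) with hc₂def
    clear_value c₁ c₂
    have hc₁ : 0 ≤ c₁ := by
      rw [hc₁def]; exact le_of_lt (div_pos (mul_pos h1β hK₁pos) (by linarith))
    have hc₂ : 0 ≤ c₂ := by
      rw [hc₂def]; exact le_of_lt (div_pos (mul_pos h1β hK₂pos) (by linarith))
    set W := fun s : ℝ => (Q s + 1)^(1-β) + c₁ * s^(δ*μ+1) + c₂ * s^(δ*ν+1) with hW
    clear_value W
    have hWd : ∀ s : ℝ, s₂ ≤ s → HasDerivAt W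
        ((((n:ℝ) * g s ^ n / (g s)^2 * (j (f s) * deriv j (f s)) * E s ^ α)
            * (1-β) * (Q s + 1)^((1-β)-1)
          + c₁ * ((δ*μ+1) * s^((δ*μ+1)-1)))
          + c₂ * ((δ*ν+1) * s^((δ*ν+1)-1))) s := by
      intro s hs
      have hs0 : (0:ℝ) < s := lt_of_lt_of_le hs₂0 hs
      have hQ1 : (0:ℝ) < Q s + 1 := by linarith [hQpos s hs0]
      have h1 := (((hQd s hs0).add_const 1).rpow_const (p := 1-β) (Or.inl hQ1.ne'))
      have h2 := (Real.hasDerivAt_rpow_const (x := s) (p := δ*μ+1)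
        (Or.inl hs0.ne')).const_mul c₁
      have h3 := (Real.hasDerivAt_rpow_const (x := s) (p := δ*ν+1)
        (Or.inl hs0.ne')).const_mul c₂
      rw [hW]
      exact (h1.add h2).add h3
    have hWnonpos : ∀ s : ℝ, s₂ ≤ s → deriv W s ≤ 0 := by
      intro s hs
      have hs0 : (0:ℝ) < s := lt_of_lt_of_le hs₂0 hs
      have hq0 := hQpos s hs0
      have hQ1 : (0:ℝ) < Q s + 1 := by linarith
      have hbpos : (0:ℝ) < (Q s + 1)^β := Real.rpow_pos_of_pos hQ1 _
      have hkey' := hs₀ s (le_trans (le_max_left _ _) hs)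
      rw [(hWd s hs).deriv]
      have e3 : (Q s + 1)^((1-β)-1) = ((Q s+1)^β)⁻¹ := by
        rw [show (1-β)-1 = -β from by ring, Real.rpow_neg hQ1.le]
      have hT0 : 0 ≤ K₁*s^(δ*μ) + K₂*s^(δ*ν) := by
        have := Real.rpow_nonneg hs0.le (δ*μ)
        have := Real.rpow_nonneg hs0.le (δ*ν)
        positivity
      have h4 : ((n:ℝ) * g s ^ n / (g s)^2 * (j (f s) * deriv j (f s)) * E s ^ α)
          * (1-β) * (Q s + 1)^((1-β)-1)
          ≤ (1-β) * (K₁*s^(δ*μ) + K₂*s^(δ*ν)) := by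
        rw [e3]
        calc ((n:ℝ) * g s ^ n / (g s)^2 * (j (f s) * deriv j (f s)) * E s ^ α)
              * (1-β) * ((Q s+1)^β)⁻¹
            ≤ ((Q s + 1)^β * (K₁*s^(δ*μ) + K₂*s^(δ*ν))) * (1-β) * ((Q s+1)^β)⁻¹ := by
              apply mul_le_mul_of_nonneg_right
                (mul_le_mul_of_nonneg_right hkey' h1β.le) (by positivity)
          _ = (1-β) * (K₁*s^(δ*μ) + K₂*s^(δ*ν)) := by
              field_simp
      have hne1 : δ*μ+1 ≠ 0 := ne_of_lt hμ1
      have hne2 : δ*ν+1 ≠ 0 := ne_of_lt hν1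
      have h5 : c₁ * ((δ*μ+1) * s^((δ*μ+1)-1)) = -((1-β)*K₁*s^(δ*μ)) := by
        rw [show (δ*μ+1)-1 = δ*μ from by ring, hc₁def]
        field_simp
      have h6 : c₂ * ((δ*ν+1) * s^((δ*ν+1)-1)) = -((1-β)*K₂*s^(δ*ν)) := by
        rw [show (δ*ν+1)-1 = δ*ν from by ring, hc₂def]
        field_simp
      rw [h5, h6]
      linarith [h4]
    have hWanti : AntitoneOn W (Set.Ici s₂) := by
      apply antitoneOn_of_deriv_nonpos (convex_Ici _)
      · exact fun x hx => ((hWd x hx).continuousAt).continuousWithinAt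
      · intro x hx
        rw [interior_Ici] at hx
        exact (hWd x (le_of_lt hx)).differentiableAt.differentiableWithinAt
      · intro x hx
        rw [interior_Ici] at hx
        exact hWnonpos x hx.le
    refine ⟨(W s₂)^(1/(1-β)), ?_⟩
    filter_upwards [eventually_ge_atTop s₂] with s hs
    have hs0 : (0:ℝ) < s := lt_of_lt_of_le hs₂0 hs
    have hq0 := hQpos s hs0
    have h7 : (Q s + 1)^(1-β) ≤ W s := by
      rw [hW]; dsimp only
      have t1 : 0 ≤ c₁*s^(δ*μ+1) := mul_nonneg hc₁ (Real.rpow_nonneg hs0.le _)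
      have t2 : 0 ≤ c₂*s^(δ*ν+1) := mul_nonneg hc₂ (Real.rpow_nonneg hs0.le _)
      linarith
    have h8 : W s ≤ W s₂ := hWanti (Set.self_mem_Ici) hs hs
    have h10 : ((Q s + 1)^(1-β))^(1/(1-β)) = Q s + 1 := by
      rw [← Real.rpow_mul (by linarith), mul_one_div, div_self h1β.ne', Real.rpow_one]
    have h9 : Q s + 1 ≤ (W s₂)^(1/(1-β)) := by
      calc Q s + 1 = ((Q s+1)^(1-β))^(1/(1-β)) := h10.symm
        _ ≤ (W s₂)^(1/(1-β)) :=
            Real.rpow_le_rpow (Real.rpow_nonneg (by linarith) _) (h7.trans h8) (by positivity)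
    linarith
  -- conclusion
  obtain ⟨M, hM⟩ := hQbdd
  rw [eventually_atTop] at hM
  obtain ⟨s₃, hs₃⟩ := hM
  set s₄ := max s₃ 1 with hs₄def
  have hs₄0 : (0:ℝ) < s₄ := lt_of_lt_of_le one_pos (le_max_right _ _)
  set Qt := fun s : ℝ => Q (max s s₄) with hQt
  clear_value Qt
  have hQtmono : Monotone Qt := by
    intro x y hxy
    rw [hQt]
    dsimp only
    exact hQmono.monotoneOn (Set.mem_Ioi.mpr (lt_of_lt_of_le hs₄0 (le_max_right _ _)))
      (Set.mem_Ioi.mpr (lt_of_lt_of_le hs₄0 (le_max_right _ _)))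
      (max_le_max hxy le_rfl)
  have hQtbdd : BddAbove (Set.range Qt) := by
    refine ⟨M, ?_⟩
    rintro x ⟨s, rfl⟩
    rw [hQt]
    dsimp only
    exact hs₃ (max s s₄) (le_trans (le_max_left _ _) (le_max_right _ _))
  set P := ⨆ s, Qt s with hP
  clear_value P
  have htend : Tendsto Qt atTop (𝓝 P) := by
    rw [hP]; exact tendsto_atTop_ciSup hQtmono hQtbdd
  have hPpos : 0 < P := by
    have h1 : Qt s₄ ≤ P := by rw [hP]; exact le_ciSup hQtbdd s₄
    have h2 : Qt s₄ = Q s₄ := by rw [hQt]; dsimp only; rw [max_self]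
    have := hQpos s₄ hs₄0
    linarith
  have hQtend : Tendsto Q atTop (𝓝 P) := by
    apply htend.congr'
    filter_upwards [eventually_ge_atTop s₄] with s hs
    rw [hQt]; dsimp only; rw [max_eq_left hs]
  refine ⟨P, hPpos, hQtend, ?_⟩
  have hdiv : Tendsto (fun s => Q s / P) atTop (𝓝 (P/P)) := hQtend.div_const P
  rw [div_self hPpos.ne'] at hdiv
  apply hdiv.congr
  intro s
  rw [hQ]
  ring
end

section
/- Let n ≥ 1 be an integer and p > 1 a real number, let g, j be differentiable on (0,∞), let f be a twice continuously differentiable solution of the rotationally symmetric p-harmonic equation, and let h : [0,∞) → ℝ be twice differentiable. Fix s > 0 such that g(s) > 0, j(f(s)) > 0, f'(s) > 0 and h'(f(s)) > 0 (so in particular E(s) > 0). Define K̃(s) = n·j(f(s))·h'(f(s))/(E(s)·g(s)²), A₁(s) = j'(f(s))·[ (3−p)·f'(s)² + n·j(f(s))²/g(s)² ], A₂(s) = (p−2)·j(f(s))·[ g'(s)·f'(s)/g(s) + f''(s) ], and A₃(s) = (p−1)·f'(s)²·h''(f(s))·E(s)·g(s)²/(n·j(f(s))·h'(f(s))). Then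 (p−1)·( h'(f(s))·f''(s) + h''(f(s))·f'(s)² ) + n·(g'(s)/g(s))·f'(s)·h'(f(s)) = K̃(s)·( A₁(s) + A₂(s) + A₃(s) ). -/
open Real Filter Topology

/-- **Formula (3.1)**: for a solution `f` of the rotationally symmetric `p`-harmonic
equation, at any `s > 0` with `g(s) > 0`, `j(f(s)) > 0`, `f'(s) > 0`, `h'(f(s)) > 0`,
`(p-1)·(h'(f(s))·f''(s) + h''(f(s))·f'(s)²) + n·(g'(s)/g(s))·f'(s)·h'(f(s))
  = K̃(s)·(A₁(s) + A₂(s) + A₃(s))`. -/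
theorem decomposition_identity (n : ℕ) (p : ℝ) (g j f h : ℝ → ℝ) (s : ℝ)
    (hn : 1 ≤ n) (hp : 1 < p)
    (hg : ∀ x > (0:ℝ), DifferentiableAt ℝ g x)
    (hj : ∀ t > (0:ℝ), DifferentiableAt ℝ j t)
    (hf : ContDiffOn ℝ 2 f (Set.Ici 0))
    (hsol : SolvesPHarmonic n p g j f)
    (hh : ∀ t ≥ (0:ℝ), DifferentiableAt ℝ h t)
    (hh' : ∀ t ≥ (0:ℝ), DifferentiableAt ℝ (deriv h) t)
    (hs : 0 < s) (hgs : 0 < g s) (hjfs : 0 < j (f s))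
    (hf's : 0 < deriv f s) (hh's : 0 < deriv h (f s)) :
    (p - 1) * (deriv h (f s) * deriv (deriv f) s + deriv (deriv h) (f s) * (deriv f s) ^ 2)
      + (n : ℝ) * (deriv g s / g s) * deriv f s * deriv h (f s)
    = ((n : ℝ) * j (f s) * deriv h (f s) / (energyDensitySq n g j f s * (g s) ^ 2)) *
        (deriv j (f s) * ((3 - p) * (deriv f s) ^ 2 + (n : ℝ) * (j (f s)) ^ 2 / (g s) ^ 2)
          + (p - 2) * j (f s) * (deriv g s * deriv f s / g s + deriv (deriv f) s)
          + (p - 1) * (deriv f s) ^ 2 * deriv (deriv h) (f s) * energyDensitySq n g j f s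
              * (g s) ^ 2 / ((n : ℝ) * j (f s) * deriv h (f s))) := by
  have hE : 0 < energyDensitySq n g j f s := by
    have : (0:ℝ) < (deriv f s)^2 := by positivity
    have h2 : 0 ≤ (n : ℝ) * (j (f s)) ^ 2 / (g s) ^ 2 := by positivity
    unfold energyDensitySq; linarith
  have heq := hsol s hs hE
  have hEne : energyDensitySq n g j f s ≠ 0 := ne_of_gt hE
  have hGne : g s ≠ 0 := ne_of_gt hgs
  have hJne : j (f s) ≠ 0 := ne_of_gt hjfs
  have hHne : deriv h (f s) ≠ 0 := ne_of_gt hh's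
  have hnne : (n : ℝ) ≠ 0 := by positivity
  have hEdef : energyDensitySq n g j f s
      = (deriv f s) ^ 2 + (n : ℝ) * (j (f s)) ^ 2 / (g s) ^ 2 := rfl
  rw [hEdef] at heq hEne ⊢
  field_simp at heq ⊢
  apply mul_right_cancel₀ hGne
  linear_combination (g s * deriv h (f s)) * heq
end

section
/- Under hypotheses (H), assume additionally that j' is continuous at ĉ := lim_{s→∞} f(s) > 0, and set A₁(s) = j'(f(s))·[ (3−p)·f'(s)² + n·j(f(s))²/g(s)² ]. Then lim_{s→∞} A₁(s)·s^{2δ} = n·j'(ĉ)·j(ĉ)²/C₁². -/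
open Real Filter Topology

lemma aux_add_rpow {x y r : ℝ} (hx : 0 ≤ x) (hy : 0 ≤ y) (hr : 0 ≤ r) :
    (x + y) ^ r ≤ 2 ^ r * (x ^ r + y ^ r) := by
  have h1 : x + y ≤ 2 * max x y := by
    rcases max_cases x y with ⟨h, h'⟩ | ⟨h, h'⟩ <;> rw [h] <;> linarith
  have h2 : (x + y) ^ r ≤ (2 * max x y) ^ r :=
    Real.rpow_le_rpow (by linarith) h1 hr
  have h3 : (2 * max x y) ^ r = 2 ^ r * (max x y) ^ r :=
    Real.mul_rpow (by norm_num) (le_max_of_le_left hx)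
  have h4 : (max x y) ^ r ≤ x ^ r + y ^ r := by
    rcases max_cases x y with ⟨h, h'⟩ | ⟨h, h'⟩ <;> rw [h]
    · nlinarith [Real.rpow_nonneg hy r]
    · nlinarith [Real.rpow_nonneg hx r]
  calc (x + y) ^ r ≤ 2 ^ r * (max x y) ^ r := by rw [← h3]; exact h2
    _ ≤ 2 ^ r * (x ^ r + y ^ r) := by
        have : (0:ℝ) ≤ (2:ℝ) ^ r := Real.rpow_nonneg (by norm_num) r
        nlinarith

lemma aux_gronwall {φ ψ : ℝ → ℝ} {s₀ K b : ℝ} (hs₀ : 0 < s₀) (hb : 0 < b + 1)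
    (hφ : ∀ s ∈ Set.Ici s₀, HasDerivAt φ (ψ s) s)
    (hψ : ∀ s ∈ Set.Ici s₀, ψ s ≤ K * s ^ b) :
    ∀ s ∈ Set.Ici s₀, φ s ≤ φ s₀ + K / (b + 1) * (s ^ (b + 1) - s₀ ^ (b + 1)) := by
  set h : ℝ → ℝ := fun s => φ s - K / (b + 1) * s ^ (b + 1) with hh
  have hder : ∀ s ∈ Set.Ici s₀, HasDerivAt h (ψ s - K / (b + 1) * ((b + 1) * s ^ b)) s := by
    intro s hs
    have hs0 : s ≠ 0 := (lt_of_lt_of_le hs₀ hs).ne'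
    have h1 : HasDerivAt (fun x : ℝ => x ^ (b + 1)) ((b + 1) * s ^ (b + 1 - 1)) s :=
      Real.hasDerivAt_rpow_const (Or.inl hs0)
    have h2 : HasDerivAt (fun x : ℝ => K / (b + 1) * x ^ (b + 1))
        (K / (b + 1) * ((b + 1) * s ^ b)) s := by
      simpa [add_sub_cancel_right] using h1.const_mul (K / (b + 1))
    exact (hφ s hs).sub h2
  have hanti : AntitoneOn h (Set.Ici s₀) := by
    apply antitoneOn_of_deriv_nonpos (convex_Ici s₀)
    · exact fun s hs => (hder s hs).continuousAt.continuousWithinAt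
    · intro s hs
      rw [interior_Ici] at hs
      exact (hder s (Set.mem_Ici.mpr (le_of_lt hs))).differentiableAt.differentiableWithinAt
    · intro s hs
      rw [interior_Ici] at hs
      rw [(hder s (Set.mem_Ici.mpr (le_of_lt hs))).deriv]
      have : K / (b + 1) * ((b + 1) * s ^ b) = K * s ^ b := by
        field_simp
      rw [this]
      linarith [hψ s (Set.mem_Ici.mpr (le_of_lt hs))]
  intro s hs
  have := hanti (Set.self_mem_Ici) hs hs
  simp only [hh] at this
  linarith

/-- Derivative of `Q = E^{(p-2)/2} gⁿ f'`: the first-order reduction of the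
rotationally symmetric p-harmonic equation. -/
lemma aux_Qderiv (n : ℕ) (p : ℝ) (g j f : ℝ → ℝ)
    (hn : 2 ≤ n)
    (hg : ContDiffOn ℝ 1 g (Set.Ioi 0)) (hj : ContDiffOn ℝ 1 j (Set.Ioi 0))
    (hgpos : ∀ s > (0:ℝ), 0 < g s)
    (hf : ContDiffOn ℝ 2 f (Set.Ici 0))
    (hfpos : ∀ s > (0:ℝ), 0 < f s) (hf'pos : ∀ s > (0:ℝ), 0 < deriv f s)
    (hsol : SolvesPHarmonic n p g j f) :
    ∀ s > (0:ℝ), HasDerivAt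
      (fun s => (energyDensitySq n g j f s) ^ ((p-2)/2) * g s ^ (n:ℕ) * deriv f s)
      ((n:ℝ) * (energyDensitySq n g j f s) ^ ((p-2)/2) * g s ^ (n:ℕ) * j (f s) * deriv j (f s)
        / g s ^ 2) s := by
  intro s hs
  have hgs : 0 < g s := hgpos s hs
  have hfs : 0 < f s := hfpos s hs
  have hf's : 0 < deriv f s := hf'pos s hs
  have hEpos : 0 < energyDensitySq n g j f s := by
    have : (0:ℝ) ≤ (n:ℝ) * (j (f s)) ^ 2 / (g s) ^ 2 := by positivity
    have h2 := pow_pos hf's 2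
    unfold energyDensitySq; linarith
  have hfd : HasDerivAt f (deriv f s) s :=
    ((hf.contDiffAt (Ici_mem_nhds hs)).differentiableAt (by norm_num)).hasDerivAt
  have hf'cd : ContDiffOn ℝ 1 (deriv f) (Set.Ioi 0) :=
    (hf.mono Set.Ioi_subset_Ici_self).deriv_of_isOpen isOpen_Ioi le_rfl
  have hf'd : HasDerivAt (deriv f) (deriv (deriv f) s) s :=
    ((hf'cd.differentiableOn one_ne_zero).differentiableAt (Ioi_mem_nhds hs)).hasDerivAt
  have hgd : HasDerivAt g (deriv g s) s :=
    ((hg.differentiableOn one_ne_zero).differentiableAt (Ioi_mem_nhds hs)).hasDerivAt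
  have hjd : HasDerivAt j (deriv j (f s)) (f s) :=
    ((hj.differentiableOn one_ne_zero).differentiableAt (Ioi_mem_nhds hfs)).hasDerivAt
  have hjf : HasDerivAt (fun x => j (f x)) (deriv j (f s) * deriv f s) s := hjd.comp s hfd
  have hnum : HasDerivAt (fun x => (n:ℝ) * (j (f x)) ^ 2)
      ((n:ℝ) * (2 * (j (f s)) ^ 1 * (deriv j (f s) * deriv f s))) s := (hjf.pow 2).const_mul _
  have hden : HasDerivAt (fun x => (g x) ^ 2) (2 * (g s) ^ 1 * deriv g s) s := hgd.pow 2
  have hE : HasDerivAt (energyDensitySq n g j f)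
      (2 * (deriv f s) ^ 1 * deriv (deriv f) s +
        (((n:ℝ) * (2 * (j (f s)) ^ 1 * (deriv j (f s) * deriv f s))) * (g s)^2
          - ((n:ℝ) * (j (f s))^2) * (2 * (g s) ^ 1 * deriv g s)) / ((g s)^2)^2) s := by
    exact ((hf'd.pow 2).add (hnum.div hden (by positivity)))
  have hrp := HasDerivAt.rpow_const (p := (p-2)/2) hE (Or.inl hEpos.ne')
  have hgn : HasDerivAt (fun x => (g x) ^ (n:ℕ)) ((n:ℕ) * (g s) ^ ((n:ℕ) - 1) * deriv g s) s :=
    hgd.pow n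
  have hQ := (hrp.mul hgn).mul hf'd
  refine hQ.congr_deriv ?_
  symm
  have hODE := hsol s hs hEpos
  have hEe : energyDensitySq n g j f s = (deriv f s) ^ 2 + (n : ℝ) * (j (f s)) ^ 2 / (g s) ^ 2 := rfl
  have hrm1 : (energyDensitySq n g j f s) ^ ((p-2)/2 - 1)
      = (energyDensitySq n g j f s) ^ ((p-2)/2) / energyDensitySq n g j f s := by
    rw [← Real.rpow_sub_one hEpos.ne']
  rw [hrm1]
  set X := (energyDensitySq n g j f s) ^ ((p-2)/2) with hX
  set E := energyDensitySq n g j f s with hEdef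
  set F := deriv f s
  set F2 := deriv (deriv f) s
  set G := g s
  set G' := deriv g s
  set Jf := j (f s)
  set Jd := deriv j (f s)
  have hGn1 : (G:ℝ) ^ ((n:ℕ) - 1) * G = G ^ (n:ℕ) := by
    rw [← pow_succ]
    congr 1
    omega
  have hGne : G ≠ 0 := hgs.ne'
  have hEne : E ≠ 0 := hEpos.ne'
  have key : F2 + ((n:ℝ)*G'/G)*F + ((p-2)/2) * E⁻¹ *
      (2 * F ^ 1 * F2 + (((n:ℝ) * (2 * Jf ^ 1 * (Jd * F))) * G^2
          - ((n:ℝ) * Jf^2) * (2 * G ^ 1 * G')) / (G^2)^2) * F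
      = (n:ℝ) * Jf * Jd / G^2 := by
    field_simp at hODE ⊢
    linear_combination hODE
  have key2 := key
  field_simp at key2
  rw [show (G:ℝ)^((n:ℕ)-1) = G^(n:ℕ)/G from by rw [eq_div_iff hGne]; exact hGn1]
  field_simp
  simp only [Pi.mul_apply]
  rw [← hEdef, ← hX, show g s = G from rfl]
  linear_combination (-(X * G ^ (n:ℕ))) * key2

set_option maxHeartbeats 1600000 in
/-- Under hypotheses (H), if moreover `j'` is continuous at `ĉ = lim_{s→∞} f(s) > 0`, then
`A₁(s) = j'(f(s))·[(3-p)·f'(s)² + n·j(f(s))²/g(s)²]` satisfies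
`A₁(s) ~ n·j'(ĉ)·j(ĉ)²/C₁² · s^{-2δ}` as `s → +∞`. -/
theorem A1_asymptotics (n : ℕ) (p a C₁ δ : ℝ) (g j f : ℝ → ℝ)
    (hn : 2 ≤ n) (hp₁ : max 2 (n : ℝ) < p) (hp₂ : p < (n : ℝ) + 1)
    (ha : 0 < a) (hC₁ : 0 < C₁) (hδ : (p - (n : ℝ))⁻¹ < δ)
    (hg : ContDiffOn ℝ 1 g (Set.Ioi 0)) (hj : ContDiffOn ℝ 1 j (Set.Ioi 0))
    (hg0 : g 0 = 0) (hj0 : j 0 = 0)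
    (hg'0 : HasDerivWithinAt g 1 (Set.Ici 0) 0) (hj'0 : HasDerivWithinAt j 1 (Set.Ici 0) 0)
    (hgpos : ∀ s > (0:ℝ), 0 < g s) (hjpos : ∀ t > (0:ℝ), 0 < j t)
    (hj' : ∀ t > (0:ℝ), 0 < deriv j t ∧ deriv j t ≤ a)
    (hg' : ∀ᶠ s in atTop, 0 < deriv g s)
    (hgasym : Tendsto (fun s => g s / (C₁ * s ^ δ)) atTop (𝓝 1))
    (hf : ContDiffOn ℝ 2 f (Set.Ici 0))
    (hfbdd : ∃ B, ∀ s ≥ (0:ℝ), |f s| ≤ B)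
    (hf0 : f 0 = 0)
    (hfpos : ∀ s > (0:ℝ), 0 < f s) (hf'pos : ∀ s > (0:ℝ), 0 < deriv f s)
    (hsol : SolvesPHarmonic n p g j f)
    (c : ℝ) (hc : Tendsto f atTop (𝓝 c)) (hcpos : 0 < c)
    (hj'c : ContinuousAt (deriv j) c) :
    Tendsto (fun s : ℝ =>
        deriv j (f s) * ((3 - p) * (deriv f s) ^ 2 + (n : ℝ) * (j (f s)) ^ 2 / (g s) ^ 2)
          * s ^ (2 * δ))
      atTop (𝓝 ((n : ℝ) * deriv j c * (j c) ^ 2 / C₁ ^ 2)) := by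
  -- ## numeric facts
  have hn2 : (2:ℝ) ≤ (n:ℝ) := by exact_mod_cast hn
  have hp2 : (2:ℝ) < p := lt_of_le_of_lt (le_max_left 2 (n:ℝ)) hp₁
  have hpn : (n:ℝ) < p := lt_of_le_of_lt (le_max_right 2 (n:ℝ)) hp₁
  have hp1 : (0:ℝ) < p - 1 := by linarith
  have hpn0 : (0:ℝ) < p - (n:ℝ) := by linarith
  have hδ0 : 0 < δ := lt_trans (inv_pos.2 hpn0) hδ
  have hδpn : 1 < δ * (p - (n:ℝ)) := by
    calc (1:ℝ) = (p - (n:ℝ))⁻¹ * (p - (n:ℝ)) := by field_simp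
      _ < δ * (p - (n:ℝ)) := by
          exact mul_lt_mul_of_pos_right hδ hpn0
  have hδ1 : 1 < δ := by nlinarith
  set r := (p-2)/2 with hr
  set α := (p-2)/(p-1) with hα
  have hr0 : 0 < r := by rw [hr]; exact div_pos (by linarith) (by norm_num)
  have hα0 : 0 < α := by rw [hα]; exact div_pos (by linarith) (by linarith)
  have hα1 : α < 1 := by rw [hα, div_lt_one hp1]; linarith
  set σ := δ*((n:ℝ)+1-p)/(2*(p-1)) with hσ
  have hσ0 : 0 < σ := by
    rw [hσ]
    exact div_pos (mul_pos hδ0 (by linarith)) (by linarith)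
  set β := δ*((n:ℝ)-2*p+2)/(p-1) with hβ
  set b := max β (-1+σ) with hb
  have hbσ : -1 + σ ≤ b := le_max_right _ _
  have hb1 : 0 < b + 1 := by linarith
  -- ## positivity facts
  have hEpos : ∀ s > (0:ℝ), 0 < energyDensitySq n g j f s := by
    intro s hs
    have h1 : (0:ℝ) ≤ (n:ℝ) * (j (f s)) ^ 2 / (g s) ^ 2 := by positivity
    have h2 := pow_pos (hf'pos s hs) 2
    unfold energyDensitySq; linarith
  -- ## monotonicity, f ≤ c, j(f s) ≤ j c
  have hfmono : StrictMonoOn f (Set.Ici 0) := by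
    apply strictMonoOn_of_deriv_pos (convex_Ici 0) hf.continuousOn
    intro s hs
    rw [interior_Ici] at hs
    exact hf'pos s hs
  have hflec : ∀ s ≥ (0:ℝ), f s ≤ c := by
    intro s hs
    refine ge_of_tendsto hc ?_
    filter_upwards [eventually_ge_atTop s, eventually_ge_atTop (0:ℝ)] with t ht ht0
    exact (hfmono.monotoneOn) hs ht0 ht
  have hJ : 0 < j c := hjpos c hcpos
  have hjmono : MonotoneOn j (Set.Ioi 0) := by
    apply monotoneOn_of_deriv_nonneg (convex_Ioi 0) hj.continuousOn
    · rw [interior_Ioi]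
      exact hj.differentiableOn one_ne_zero
    · intro t ht
      rw [interior_Ioi] at ht
      exact (hj' t ht).1.le
  have hjfle : ∀ s > (0:ℝ), j (f s) ≤ j c := fun s hs =>
    hjmono (Set.mem_Ioi.2 (hfpos s hs)) (Set.mem_Ioi.2 hcpos) (hflec s hs.le)
  -- ## asymptotic bounds on g
  obtain ⟨s₁, hs₁1, hgb⟩ : ∃ s₁ : ℝ, 1 ≤ s₁ ∧
      ∀ s ≥ s₁, C₁/2 * s ^ δ ≤ g s ∧ g s ≤ 2*C₁ * s ^ δ := by
    have h1 : ∀ᶠ s in atTop, g s / (C₁ * s ^ δ) ∈ Set.Ioo (1/2:ℝ) 2 :=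
      hgasym (Ioo_mem_nhds (show (1:ℝ)/2 < 1 by norm_num) (show (1:ℝ) < 2 by norm_num))
    rw [eventually_atTop] at h1
    obtain ⟨s₀, hs₀⟩ := h1
    refine ⟨max s₀ 1, le_max_right _ _, fun s hs => ?_⟩
    have hs1 : 1 ≤ s := le_trans (le_max_right s₀ 1) hs
    have hs0 : (0:ℝ) < s := lt_of_lt_of_le one_pos hs1
    have hd : (0:ℝ) < C₁ * s ^ δ := by positivity
    have h2 := hs₀ s (le_trans (le_max_left s₀ 1) hs)
    simp only [Set.mem_Ioo] at h2
    obtain ⟨hl, hu⟩ := h2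
    rw [div_lt_iff₀ hd] at hu
    rw [lt_div_iff₀ hd] at hl
    constructor <;> nlinarith [Real.rpow_pos_of_pos hs0 δ]
  have hs₁0 : (0:ℝ) < s₁ := lt_of_lt_of_le one_pos hs₁1
  -- generic power bound for g
  have hgpow : ∀ e : ℝ, ∀ s ≥ s₁, g s ^ e ≤ (max ((C₁/2)^e) ((2*C₁)^e)) * s ^ (δ*e) := by
    intro e s hs
    have hs1 : 1 ≤ s := le_trans hs₁1 hs
    have hs0 : (0:ℝ) < s := lt_of_lt_of_le one_pos hs1
    have hgs : 0 < g s := hgpos s hs0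
    obtain ⟨hgl, hgu⟩ := hgb s hs
    have hsδ : (0:ℝ) < s ^ δ := Real.rpow_pos_of_pos hs0 δ
    rw [Real.rpow_mul hs0.le]
    rcases le_or_gt 0 e with he | he
    · calc g s ^ e ≤ (2*C₁ * s ^ δ) ^ e := Real.rpow_le_rpow hgs.le hgu he
        _ = (2*C₁)^e * (s ^ δ)^e := Real.mul_rpow (by positivity) hsδ.le
        _ ≤ (max ((C₁/2)^e) ((2*C₁)^e)) * (s ^ δ)^e := by
            have := Real.rpow_nonneg hsδ.le e
            exact mul_le_mul_of_nonneg_right (le_max_right _ _) this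
    · calc g s ^ e ≤ (C₁/2 * s ^ δ) ^ e :=
            Real.rpow_le_rpow_of_nonpos (by positivity) hgl he.le
        _ = (C₁/2)^e * (s ^ δ)^e := Real.mul_rpow (by positivity) hsδ.le
        _ ≤ (max ((C₁/2)^e) ((2*C₁)^e)) * (s ^ δ)^e := by
            have := Real.rpow_nonneg hsδ.le e
            exact mul_le_mul_of_nonneg_right (le_max_left _ _) this
  -- ## the function Q and its derivative
  set Q : ℝ → ℝ := fun s => (energyDensitySq n g j f s) ^ r * g s ^ (n:ℕ) * deriv f s with hQdef
  set Q' : ℝ → ℝ := fun s =>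
    (n:ℝ) * (energyDensitySq n g j f s) ^ r * g s ^ (n:ℕ) * j (f s) * deriv j (f s) / g s ^ 2
    with hQ'def
  have hQd : ∀ s > (0:ℝ), HasDerivAt Q (Q' s) s :=
    aux_Qderiv n p g j f hn hg hj hgpos hf hfpos hf'pos hsol
  have hQnn : ∀ s > (0:ℝ), 0 ≤ Q s := by
    intro s hs
    have := hgpos s hs
    have := hf'pos s hs
    have := (hEpos s hs).le
    rw [hQdef]
    positivity
  -- ## step: f'(s)^2 * s^(2δ) → 0
  have hkey : Tendsto (fun s : ℝ => (deriv f s)^2 * s ^ (2*δ)) atTop (𝓝 0) := by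
    set e₁ := (n:ℝ) - 2 - (n:ℝ)*α with he₁
    set e₂ := (n:ℝ) - p with he₂
    set M₁ := max ((C₁/2)^e₁) ((2*C₁)^e₁) with hM₁
    set M₂ := max ((C₁/2)^e₂) ((2*C₁)^e₂) with hM₂
    set M₃ := max ((C₁/2)^(-(n:ℝ))) ((2*C₁)^(-(n:ℝ))) with hM₃
    have hC2 : (0:ℝ) < C₁/2 := by linarith
    have hM₁0 : 0 < M₁ := lt_max_of_lt_left (Real.rpow_pos_of_pos hC2 _)
    have hM₂0 : 0 < M₂ := lt_max_of_lt_left (Real.rpow_pos_of_pos hC2 _)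
    have hM₃0 : 0 < M₃ := lt_max_of_lt_left (Real.rpow_pos_of_pos hC2 _)
    have hn0 : (0:ℝ) < (n:ℝ) := by linarith
    have h2r : (0:ℝ) < 2^r := Real.rpow_pos_of_pos two_pos r
    have hnj : (0:ℝ) < ((n:ℝ)*(j c)^2)^r := Real.rpow_pos_of_pos (by positivity) r
    set K := (n:ℝ) * j c * a * 2^r * (M₁ + ((n:ℝ)*(j c)^2)^r * M₂) with hK
    have hK0 : 0 < K := by
      apply mul_pos (mul_pos (mul_pos (mul_pos hn0 hJ) ha) h2r)
      have := mul_pos hnj hM₂0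
      linarith
    -- exponent facts
    have hδe₁ : δ * e₁ = β := by rw [he₁, hβ, hα]; field_simp; ring_nf
    have hδe₁b : δ * e₁ ≤ b := by rw [hδe₁]; exact le_max_left _ _
    have hδe₂b : δ * e₂ ≤ b := by
      have h1 : δ * e₂ = -(δ * (p - (n:ℝ))) := by rw [he₂]; ring
      have : δ * e₂ < -1 := by rw [h1]; linarith
      linarith
    -- ## the fundamental differential inequality
    have hQest : ∀ s, s₁ ≤ s → Q' s ≤ K * (Q s + 1)^α * s^b := by
      intro s hss
      have hs1 : 1 ≤ s := le_trans hs₁1 hss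
      have hs0 : (0:ℝ) < s := lt_of_lt_of_le one_pos hs1
      have hgs : 0 < g s := hgpos s hs0
      have hfs : 0 < f s := hfpos s hs0
      have hf's : 0 < deriv f s := hf'pos s hs0
      have hEp : 0 < energyDensitySq n g j f s := hEpos s hs0
      obtain ⟨hJd0, hJda⟩ := hj' (f s) hfs
      have hJf0 : 0 < j (f s) := hjpos (f s) hfs
      have hJfle := hjfle s hs0
      have hQs := hQnn s hs0
      have hQ1pos : (0:ℝ) < Q s + 1 := by linarith
      have hQα1 : 1 ≤ (Q s + 1)^α := by
        calc (1:ℝ) = 1^α := (Real.one_rpow α).symm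
          _ ≤ (Q s + 1)^α := Real.rpow_le_rpow (by norm_num) (by linarith) hα0.le
      have hgnm2 : (0:ℝ) ≤ g s ^ ((n:ℝ) - 2) := Real.rpow_nonneg hgs.le _
      -- rpow computations
      have hF2r : ((deriv f s)^2)^r = (deriv f s)^(p-2) := by
        rw [← Real.rpow_natCast (deriv f s) 2, ← Real.rpow_mul hf's.le]
        congr 1
        rw [hr]; push_cast; ring
      have hGr : ((n:ℝ)*(j c)^2/(g s)^2)^r = ((n:ℝ)*(j c)^2)^r * (g s)^((2:ℝ)-p) := by
        rw [Real.div_rpow (by positivity) (by positivity), ← Real.rpow_natCast (g s) 2,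
          ← Real.rpow_mul hgs.le, div_eq_mul_inv, ← Real.rpow_neg hgs.le]
        congr 1
        rw [hr]; push_cast; ring
      -- E bound
      have hEle : energyDensitySq n g j f s ≤ (deriv f s)^2 + (n:ℝ)*(j c)^2/(g s)^2 := by
        unfold energyDensitySq
        have h2 : (j (f s))^2 ≤ (j c)^2 := pow_le_pow_left₀ hJf0.le hJfle 2
        gcongr
      have hXle : (energyDensitySq n g j f s) ^ r
          ≤ 2^r * ((deriv f s) ^ (p-2) + ((n:ℝ)*(j c)^2)^r * (g s) ^ ((2:ℝ)-p)) := by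
        calc (energyDensitySq n g j f s) ^ r
            ≤ ((deriv f s)^2 + (n:ℝ)*(j c)^2/(g s)^2) ^ r :=
              Real.rpow_le_rpow hEp.le hEle hr0.le
          _ ≤ 2^r * (((deriv f s)^2)^r + ((n:ℝ)*(j c)^2/(g s)^2)^r) :=
              aux_add_rpow (by positivity) (by positivity) hr0.le
          _ = _ := by rw [hF2r, hGr]
      -- Q lower bound
      have hQs_eq : Q s = (energyDensitySq n g j f s)^r * g s ^ ((n:ℝ)) * deriv f s := by
        simp only [hQdef]
        rw [Real.rpow_natCast]
      have hgN : (0:ℝ) < g s ^ ((n:ℝ)) := Real.rpow_pos_of_pos hgs _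
      have hQlow : (deriv f s) ^ (p-1) * (g s) ^ ((n:ℝ)) ≤ Q s := by
        have hle : (deriv f s)^2 ≤ energyDensitySq n g j f s := by
          unfold energyDensitySq
          have : (0:ℝ) ≤ (n:ℝ) * (j (f s)) ^ 2 / (g s) ^ 2 := by positivity
          linarith
        have h2 : (deriv f s)^(p-2) ≤ (energyDensitySq n g j f s)^r := by
          rw [← hF2r]
          exact Real.rpow_le_rpow (by positivity) hle hr0.le
        have h3 : (deriv f s)^(p-1) = (deriv f s)^(p-2) * deriv f s := by
          rw [show p-1 = (p-2)+1 by ring, Real.rpow_add_one hf's.ne']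
        calc (deriv f s)^(p-1) * (g s)^((n:ℝ))
            = (deriv f s)^(p-2) * (g s)^((n:ℝ)) * deriv f s := by rw [h3]; ring
          _ ≤ (energyDensitySq n g j f s)^r * (g s)^((n:ℝ)) * deriv f s :=
              mul_le_mul_of_nonneg_right
                (mul_le_mul_of_nonneg_right h2 hgN.le) hf's.le
          _ = Q s := hQs_eq.symm
      -- f'^{p-2} bound
      have hFp2 : (deriv f s)^(p-2) ≤ (Q s + 1)^α * (g s) ^ (-(n:ℝ)*α) := by
        have h1 : (deriv f s)^(p-1) ≤ (Q s + 1) * (g s)^(-(n:ℝ)) := by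
          rw [Real.rpow_neg hgs.le, ← div_eq_mul_inv, le_div_iff₀ hgN]
          calc (deriv f s)^(p-1) * (g s)^((n:ℝ)) ≤ Q s := hQlow
            _ ≤ Q s + 1 := by linarith
        calc (deriv f s)^(p-2) = ((deriv f s)^(p-1))^α := by
              rw [← Real.rpow_mul hf's.le]
              congr 1
              rw [hα]; field_simp
          _ ≤ ((Q s + 1) * (g s)^(-(n:ℝ)))^α :=
              Real.rpow_le_rpow (Real.rpow_nonneg hf's.le _) h1 hα0.le
          _ = (Q s + 1)^α * (g s)^(-(n:ℝ)*α) := by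
              rw [Real.mul_rpow hQ1pos.le (Real.rpow_nonneg hgs.le _), ← Real.rpow_mul hgs.le]
      -- Q' in rpow form
      have hmerge : g s ^ ((n:ℝ) - 2) * g s ^ (2:ℕ) = g s ^ (n:ℕ) := by
        rw [← Real.rpow_natCast (g s) 2, ← Real.rpow_add hgs, ← Real.rpow_natCast (g s) n]
        norm_num
      have hQ'form : Q' s = (n:ℝ) * (energyDensitySq n g j f s)^r * j (f s) * deriv j (f s)
          * g s ^ ((n:ℝ) - 2) := by
        simp only [hQ'def]
        rw [div_eq_iff (by positivity : (g s:ℝ)^2 ≠ 0)]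
        linear_combination (-((n:ℝ) * (energyDensitySq n g j f s)^r * j (f s) * deriv j (f s))) * hmerge
      -- exponent collapse
      have hA : (g s) ^ (-(n:ℝ)*α) * g s ^ ((n:ℝ) - 2) = g s ^ e₁ := by
        rw [← Real.rpow_add hgs]; congr 1; rw [he₁]; ring
      have hB : (g s) ^ ((2:ℝ)-p) * g s ^ ((n:ℝ) - 2) = g s ^ e₂ := by
        rw [← Real.rpow_add hgs]; congr 1; rw [he₂]; ring
      -- g-power upper bounds
      have hge₁ : g s ^ e₁ ≤ M₁ * s ^ b := by
        calc g s ^ e₁ ≤ M₁ * s ^ (δ*e₁) := hgpow e₁ s hss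
          _ ≤ M₁ * s ^ b := mul_le_mul_of_nonneg_left
              (Real.rpow_le_rpow_of_exponent_le hs1 hδe₁b) hM₁0.le
      have hge₂ : g s ^ e₂ ≤ M₂ * s ^ b := by
        calc g s ^ e₂ ≤ M₂ * s ^ (δ*e₂) := hgpow e₂ s hss
          _ ≤ M₂ * s ^ b := mul_le_mul_of_nonneg_left
              (Real.rpow_le_rpow_of_exponent_le hs1 hδe₂b) hM₂0.le
      have hsb0 : (0:ℝ) ≤ s ^ b := Real.rpow_nonneg hs0.le _
      have hQα0 : (0:ℝ) ≤ (Q s + 1)^α := Real.rpow_nonneg hQ1pos.le _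
      -- the chain
      calc Q' s = ((n:ℝ) * j (f s) * deriv j (f s)) * ((energyDensitySq n g j f s)^r
            * g s ^ ((n:ℝ) - 2)) := by rw [hQ'form]; ring
        _ ≤ ((n:ℝ) * j c * a) * ((2^r * ((deriv f s)^(p-2)
              + ((n:ℝ)*(j c)^2)^r * (g s)^((2:ℝ)-p))) * g s ^ ((n:ℝ) - 2)) := by
            apply mul_le_mul
            · have h1 : j (f s) * deriv j (f s) ≤ j c * a :=
                mul_le_mul hJfle hJda hJd0.le hJ.le
              calc (n:ℝ) * j (f s) * deriv j (f s) = (n:ℝ) * (j (f s) * deriv j (f s)) := by ring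
                _ ≤ (n:ℝ) * (j c * a) := mul_le_mul_of_nonneg_left h1 hn0.le
                _ = (n:ℝ) * j c * a := by ring
            · exact mul_le_mul_of_nonneg_right hXle hgnm2
            · positivity
            · positivity
        _ = ((n:ℝ) * j c * a * 2^r) * ((deriv f s)^(p-2) * g s ^ ((n:ℝ) - 2)
              + ((n:ℝ)*(j c)^2)^r * ((g s) ^ ((2:ℝ)-p) * g s ^ ((n:ℝ) - 2))) := by ring
        _ ≤ ((n:ℝ) * j c * a * 2^r) * (((Q s + 1)^α * (g s) ^ (-(n:ℝ)*α)) * g s ^ ((n:ℝ) - 2)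
              + ((n:ℝ)*(j c)^2)^r * ((g s) ^ ((2:ℝ)-p) * g s ^ ((n:ℝ) - 2))) := by
            have h1 := mul_le_mul_of_nonneg_right hFp2 hgnm2
            have h2 : (0:ℝ) ≤ (n:ℝ) * j c * a * 2^r := by positivity
            apply mul_le_mul_of_nonneg_left _ h2
            exact add_le_add_left h1 _
        _ = ((n:ℝ) * j c * a * 2^r) * ((Q s + 1)^α * g s ^ e₁
              + ((n:ℝ)*(j c)^2)^r * g s ^ e₂) := by
            rw [← hA, ← hB]; ring
        _ ≤ ((n:ℝ) * j c * a * 2^r) * ((Q s + 1)^α * (M₁ * s ^ b)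
              + ((n:ℝ)*(j c)^2)^r * ((Q s + 1)^α * (M₂ * s ^ b))) := by
            have h2 : (0:ℝ) ≤ (n:ℝ) * j c * a * 2^r := by positivity
            apply mul_le_mul_of_nonneg_left _ h2
            apply add_le_add
            · exact mul_le_mul_of_nonneg_left hge₁ hQα0
            · apply mul_le_mul_of_nonneg_left _ hnj.le
              calc g s ^ e₂ ≤ M₂ * s ^ b := hge₂
                _ ≤ (Q s + 1)^α * (M₂ * s ^ b) :=
                    le_mul_of_one_le_left (by positivity) hQα1
        _ = K * (Q s + 1)^α * s ^ b := by rw [hK]; ring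
    -- ## Grönwall
    set Φ : ℝ → ℝ := fun s => (Q s + 1)^(1-α) with hΦdef
    set ψ : ℝ → ℝ := fun s => Q' s * (1-α) * (Q s + 1)^(1-α-1) with hψdef
    have hΦd : ∀ s ∈ Set.Ici s₁, HasDerivAt Φ (ψ s) s := by
      intro s hs
      have hs0 : 0 < s := lt_of_lt_of_le hs₁0 hs
      have hQ1 : Q s + 1 ≠ 0 := by have := hQnn s hs0; positivity
      exact HasDerivAt.rpow_const (p := 1-α) ((hQd s hs0).add_const 1) (Or.inl hQ1)
    have hψb : ∀ s ∈ Set.Ici s₁, ψ s ≤ ((1-α)*K) * s ^ b := by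
      intro s hs
      have hs0 : 0 < s := lt_of_lt_of_le hs₁0 hs
      have hQs := hQnn s hs0
      have hQ1pos : (0:ℝ) < Q s + 1 := by linarith
      have hQ'b := hQest s hs
      have hpow : (Q s + 1)^(1-α-1) = ((Q s+1)^α)⁻¹ := by
        rw [show (1:ℝ)-α-1 = -α by ring, Real.rpow_neg hQ1pos.le]
      have hQαpos : (0:ℝ) < (Q s + 1)^α := Real.rpow_pos_of_pos hQ1pos _
      calc ψ s = Q' s * (1-α) * (Q s+1)^(1-α-1) := rfl
        _ ≤ (K * (Q s+1)^α * s^b) * (1-α) * (Q s+1)^(1-α-1) := by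
            apply mul_le_mul_of_nonneg_right _ (Real.rpow_nonneg hQ1pos.le _)
            exact mul_le_mul_of_nonneg_right hQ'b (by linarith)
        _ = ((1-α)*K) * s^b := by
            rw [hpow]
            field_simp
    have hgron := aux_gronwall hs₁0 hb1 hΦd hψb
    set D := Φ s₁ + ((1-α)*K)/(b+1) with hD
    have hΦpos : (0:ℝ) < Φ s₁ := by
      have := hQnn s₁ hs₁0
      exact Real.rpow_pos_of_pos (by linarith) _
    have hD0 : 0 < D := by
      have : (0:ℝ) ≤ ((1-α)*K)/(b+1) := div_nonneg (mul_nonneg (by linarith) hK0.le) hb1.le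
      rw [hD]; linarith
    have hΦb : ∀ s ≥ s₁, Φ s ≤ D * s ^ (b+1) := by
      intro s hs
      have h1 := hgron s hs
      have hs1 : 1 ≤ s := le_trans hs₁1 hs
      have hsb : 1 ≤ s ^ (b+1) := Real.one_le_rpow hs1 hb1.le
      have hsb0 : (0:ℝ) ≤ s₁ ^ (b+1) := Real.rpow_nonneg hs₁0.le _
      have hKb : (0:ℝ) ≤ ((1-α)*K)/(b+1) := div_nonneg (mul_nonneg (by linarith) hK0.le) hb1.le
      rw [hD]
      have e1 : 0 ≤ Φ s₁ * (s^(b+1) - 1) := mul_nonneg hΦpos.le (by linarith)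
      have e2 : 0 ≤ ((1-α)*K)/(b+1) * s₁^(b+1) := mul_nonneg hKb hsb0
      linarith only [h1, e1, e2]
    have hQb : ∀ s ≥ s₁, Q s + 1 ≤ D^(p-1) * s ^ ((b+1)*(p-1)) := by
      intro s hs
      have hs0 : 0 < s := lt_of_lt_of_le hs₁0 hs
      have hQs := hQnn s hs0
      have h1 : Q s + 1 = (Φ s)^(p-1) := by
        show Q s + 1 = ((Q s + 1)^(1-α))^(p-1)
        rw [← Real.rpow_mul (by linarith : (0:ℝ) ≤ Q s + 1),
          show (1-α)*(p-1) = 1 by rw [hα]; field_simp; norm_num, Real.rpow_one]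
      rw [h1]
      calc (Φ s)^(p-1) ≤ (D * s^(b+1))^(p-1) :=
            Real.rpow_le_rpow (Real.rpow_nonneg (by linarith) _) (hΦb s hs) (by linarith)
        _ = D^(p-1) * s^((b+1)*(p-1)) := by
            rw [Real.mul_rpow hD0.le (Real.rpow_nonneg hs0.le _), ← Real.rpow_mul hs0.le]
    -- ## bound on f'
    set C₈ := (D^(p-1) * M₃)^(1/(p-1)) with hC₈
    set μ := ((b+1)*(p-1) + δ*(-(n:ℝ)))/(p-1) with hμ
    set κ := 2*μ + 2*δ with hκdef
    have hC₈0 : 0 < C₈ := Real.rpow_pos_of_pos (by positivity) _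
    have hFb : ∀ s ≥ s₁, (deriv f s)^2 * s ^ (2*δ) ≤ C₈^2 * s ^ κ := by
      intro s hss
      have hs1 : 1 ≤ s := le_trans hs₁1 hss
      have hs0 : (0:ℝ) < s := lt_of_lt_of_le one_pos hs1
      have hgs : 0 < g s := hgpos s hs0
      have hfs : 0 < f s := hfpos s hs0
      have hf's : 0 < deriv f s := hf'pos s hs0
      have hEp : 0 < energyDensitySq n g j f s := hEpos s hs0
      have hgN : (0:ℝ) < g s ^ ((n:ℝ)) := Real.rpow_pos_of_pos hgs _
      have hQs := hQnn s hs0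
      have hF2r : ((deriv f s)^2)^r = (deriv f s)^(p-2) := by
        rw [← Real.rpow_natCast (deriv f s) 2, ← Real.rpow_mul hf's.le]
        congr 1
        rw [hr]; push_cast; ring
      have hQs_eq : Q s = (energyDensitySq n g j f s)^r * g s ^ ((n:ℝ)) * deriv f s := by
        simp only [hQdef]
        rw [Real.rpow_natCast]
      have hQlow : (deriv f s) ^ (p-1) * (g s) ^ ((n:ℝ)) ≤ Q s := by
        have hle : (deriv f s)^2 ≤ energyDensitySq n g j f s := by
          unfold energyDensitySq
          have : (0:ℝ) ≤ (n:ℝ) * (j (f s)) ^ 2 / (g s) ^ 2 := by positivity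
          linarith
        have h2 : (deriv f s)^(p-2) ≤ (energyDensitySq n g j f s)^r := by
          rw [← hF2r]
          exact Real.rpow_le_rpow (by positivity) hle hr0.le
        have h3 : (deriv f s)^(p-1) = (deriv f s)^(p-2) * deriv f s := by
          rw [show p-1 = (p-2)+1 by ring, Real.rpow_add_one hf's.ne']
        calc (deriv f s)^(p-1) * (g s)^((n:ℝ))
            = (deriv f s)^(p-2) * (g s)^((n:ℝ)) * deriv f s := by rw [h3]; ring
          _ ≤ (energyDensitySq n g j f s)^r * (g s)^((n:ℝ)) * deriv f s :=
              mul_le_mul_of_nonneg_right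
                (mul_le_mul_of_nonneg_right h2 hgN.le) hf's.le
          _ = Q s := hQs_eq.symm
      -- F^{p-1} ≤ (Q+1) * g^{-n} ≤ D^{p-1} M₃ s^{(b+1)(p-1) - nδ}
      have h4 : (deriv f s)^(p-1) ≤ (Q s + 1) * (g s)^(-(n:ℝ)) := by
        rw [Real.rpow_neg hgs.le, ← div_eq_mul_inv, le_div_iff₀ hgN]
        calc (deriv f s)^(p-1) * (g s)^((n:ℝ)) ≤ Q s := hQlow
          _ ≤ Q s + 1 := by linarith
      have h5 : (deriv f s)^(p-1) ≤ (D^(p-1) * M₃) * s ^ ((b+1)*(p-1) + δ*(-(n:ℝ))) := by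
        calc (deriv f s)^(p-1) ≤ (Q s + 1) * (g s)^(-(n:ℝ)) := h4
          _ ≤ (D^(p-1) * s ^ ((b+1)*(p-1))) * (M₃ * s ^ (δ*(-(n:ℝ)))) := by
              apply mul_le_mul (hQb s hss) (hgpow (-(n:ℝ)) s hss)
                (Real.rpow_nonneg hgs.le _) (by positivity)
          _ = (D^(p-1) * M₃) * (s ^ ((b+1)*(p-1)) * s ^ (δ*(-(n:ℝ)))) := by ring
          _ = (D^(p-1) * M₃) * s ^ ((b+1)*(p-1) + δ*(-(n:ℝ))) := by
              rw [← Real.rpow_add hs0]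
      have h6 : deriv f s ≤ C₈ * s ^ μ := by
        have h7 : deriv f s = ((deriv f s)^(p-1))^(1/(p-1)) := by
          rw [← Real.rpow_mul hf's.le, show (p-1)*(1/(p-1)) = 1 by field_simp, Real.rpow_one]
        rw [h7, hC₈, hμ]
        calc ((deriv f s)^(p-1))^(1/(p-1))
            ≤ ((D^(p-1) * M₃) * s ^ ((b+1)*(p-1) + δ*(-(n:ℝ))))^(1/(p-1)) :=
              Real.rpow_le_rpow (Real.rpow_nonneg hf's.le _) h5 (by positivity)
          _ = (D^(p-1) * M₃)^(1/(p-1)) * s ^ (((b+1)*(p-1) + δ*(-(n:ℝ)))/(p-1)) := by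
              rw [Real.mul_rpow (by positivity) (Real.rpow_nonneg hs0.le _),
                ← Real.rpow_mul hs0.le]
              congr 2
              field_simp
      have h8 : (deriv f s)^2 ≤ (C₈ * s ^ μ)^2 := pow_le_pow_left₀ hf's.le h6 2
      calc (deriv f s)^2 * s ^ (2*δ) ≤ (C₈ * s ^ μ)^2 * s ^ (2*δ) :=
            mul_le_mul_of_nonneg_right h8 (Real.rpow_nonneg hs0.le _)
        _ = C₈^2 * (s ^ μ * s ^ μ * s ^ (2*δ)) := by ring
        _ = C₈^2 * s ^ κ := by
            rw [← Real.rpow_add hs0, ← Real.rpow_add hs0, hκdef]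
            ring_nf
    -- κ < 0
    have hκ0 : κ < 0 := by
      have hκp : κ * (p-1) = 2*(b+1)*(p-1) - 2*(n:ℝ)*δ + 2*δ*(p-1) := by
        rw [hκdef, hμ]; field_simp; ring
      rcases max_cases β (-1+σ) with ⟨hbe, _⟩ | ⟨hbe, _⟩
      · have hbb : b = β := hb.trans hbe
        have heq : κ * (p-1) = 2*(p-1)*(1-δ) := by
          rw [hκp, hbb, hβ]; field_simp; ring
        have f1 : κ*(p-1) < 0 := by
          rw [heq]
          exact mul_neg_of_pos_of_neg (by linarith only [hp1]) (by linarith only [hδ1])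
        by_contra h
        push_neg at h
        exact absurd (mul_nonneg h hp1.le) (by linarith only [f1])
      · have hbb : b = -1+σ := hb.trans hbe
        have heq : κ * (p-1) = δ*(p-(n:ℝ)-1) := by
          rw [hκp, hbb, hσ]; field_simp; ring
        have f1 : κ*(p-1) < 0 := by
          rw [heq]
          exact mul_neg_of_pos_of_neg hδ0 (by linarith only [hp₂])
        by_contra h
        push_neg at h
        exact absurd (mul_nonneg h hp1.le) (by linarith only [f1])
    -- conclude by squeeze
    have hCk : Tendsto (fun s:ℝ => C₈^2 * s ^ κ) atTop (𝓝 0) := by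
      have h1 := (tendsto_rpow_neg_atTop (show (0:ℝ) < -κ by linarith)).const_mul (C₈^2)
      rw [mul_zero] at h1
      refine h1.congr ?_
      intro s
      rw [neg_neg]
    apply squeeze_zero' ?_ ?_ hCk
    · filter_upwards [eventually_gt_atTop (0:ℝ)] with s hs
      positivity
    · filter_upwards [eventually_ge_atTop s₁] with s hs
      exact hFb s hs
  -- ## step: second term limit
  have hterm2 : Tendsto (fun s : ℝ => (n:ℝ) * (j (f s))^2 / (g s)^2 * s ^ (2*δ))
      atTop (𝓝 ((n:ℝ) * (j c)^2 / C₁^2)) := by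
    have hjcont : ContinuousAt j c := hj.continuousOn.continuousAt (Ioi_mem_nhds hcpos)
    have hnum : Tendsto (fun s : ℝ => (n:ℝ) * (j (f s))^2) atTop (𝓝 ((n:ℝ) * (j c)^2)) := by
      have : Tendsto (fun s : ℝ => j (f s)) atTop (𝓝 (j c)) := hjcont.tendsto.comp hc
      exact (this.pow 2).const_mul _
    have hden : Tendsto (fun s : ℝ => (g s / (C₁ * s ^ δ))^2 * C₁^2) atTop (𝓝 (1^2 * C₁^2)) :=
      (hgasym.pow 2).mul_const _
    have hne : (1:ℝ)^2 * C₁^2 ≠ 0 := by positivity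
    have hlim := hnum.div hden hne
    have hval : ((n:ℝ) * (j c)^2) / ((1:ℝ)^2 * C₁^2) = (n:ℝ) * (j c)^2 / C₁^2 := by norm_num
    rw [hval] at hlim
    refine hlim.congr' ?_
    filter_upwards [eventually_ge_atTop s₁] with s hs
    have hs1 : 1 ≤ s := le_trans hs₁1 hs
    have hs0 : (0:ℝ) < s := lt_of_lt_of_le one_pos hs1
    have hgs : 0 < g s := hgpos s hs0
    have hsδ : (0:ℝ) < s ^ δ := Real.rpow_pos_of_pos hs0 δ
    have hss : s ^ (2*δ) = (s ^ δ)^2 := by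
      rw [← Real.rpow_natCast (s ^ δ) 2, ← Real.rpow_mul hs0.le]
      norm_num
      ring_nf
    rw [hss]
    simp only [Pi.div_apply]
    field_simp
  -- ## combine
  have hjd : Tendsto (fun s : ℝ => deriv j (f s)) atTop (𝓝 (deriv j c)) :=
    hj'c.tendsto.comp hc
  have := hjd.mul (((hkey.const_mul (3-p)).add hterm2))
  have heq : ∀ s : ℝ,
      deriv j (f s) * ((3 - p) * ((deriv f s)^2 * s ^ (2*δ)) + (n:ℝ) * (j (f s))^2 / (g s)^2 * s ^ (2*δ))
      = deriv j (f s) * ((3 - p) * (deriv f s) ^ 2 + (n : ℝ) * (j (f s)) ^ 2 / (g s) ^ 2) * s ^ (2 * δ) := by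
    intro s; ring
  rw [show ((n : ℝ) * deriv j c * (j c) ^ 2 / C₁ ^ 2)
      = deriv j c * ((3-p) * 0 + (n:ℝ) * (j c)^2 / C₁^2) by ring]
  exact Tendsto.congr heq this
end

section
/- Let n ≥ 2 be an integer and p a real number with max{2,n} < p < n+1, let δ > (p−n)⁻¹ and 0 < σ < 1, let g, j be the specific warping functions, and let f be a bounded, twice continuously differentiable solution of the rotationally symmetric p-harmonic equation with f(0) = 0 and f(s) > 0, f'(s) > 0 for all s > 0. Set A₂(s) = (p−2)·j(f(s))·[ g'(s)·f'(s)/g(s) + f''(s) ]. Then there exists a sequence s_k → +∞ such that A₂(s_k) < 0 for all k. -/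
open Real Filter Topology

/-- The specific warping function `g(s) = (s + δ^{-1/(δ-1)})^δ - δ^{-δ/(δ-1)}`. -/
noncomputable def warpG (δ : ℝ) (s : ℝ) : ℝ :=
  (s + δ ^ (-(1 / (δ - 1)))) ^ δ - δ ^ (-(δ / (δ - 1)))

/-- The specific warping function `j(t) = (t + σ^{1/(1-σ)})^σ - σ^{σ/(1-σ)}`. -/
noncomputable def warpJ (σ : ℝ) (t : ℝ) : ℝ :=
  (t + σ ^ (1 / (1 - σ))) ^ σ - σ ^ (σ / (1 - σ))

set_option maxHeartbeats 1000000 in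
/-- With the specific warping functions, the term
`A₂(s) = (p-2)·j(f(s))·[g'(s)·f'(s)/g(s) + f''(s)]` is negative along some sequence
`s_k → +∞`. -/
theorem A2_negative_sequence (n : ℕ) (p δ σ : ℝ) (f : ℝ → ℝ)
    (hn : 2 ≤ n) (hp₁ : max 2 (n : ℝ) < p) (hp₂ : p < (n : ℝ) + 1)
    (hδ : (p - (n : ℝ))⁻¹ < δ) (hσ₀ : 0 < σ) (hσ₁ : σ < 1)
    (hf : ContDiffOn ℝ 2 f (Set.Ici 0))
    (hfbdd : ∃ B, ∀ s ≥ (0:ℝ), |f s| ≤ B)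
    (hf0 : f 0 = 0)
    (hfpos : ∀ s > (0:ℝ), 0 < f s) (hf'pos : ∀ s > (0:ℝ), 0 < deriv f s)
    (hsol : SolvesPHarmonic n p (warpG δ) (warpJ σ) f) :
    ∃ sk : ℕ → ℝ, Tendsto sk atTop atTop ∧
      ∀ k : ℕ,
        (p - 2) * warpJ σ (f (sk k)) *
          (deriv (warpG δ) (sk k) * deriv f (sk k) / warpG δ (sk k)
            + deriv (deriv f) (sk k)) < 0 := by
  obtain ⟨B, hB⟩ := hfbdd
  have hp2 : (2:ℝ) < p := lt_of_le_of_lt (le_max_left _ _) hp₁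
  have hpn : (n:ℝ) < p := lt_of_le_of_lt (le_max_right _ _) hp₁
  have hn2 : (2:ℝ) ≤ (n:ℝ) := by exact_mod_cast hn
  have hδ1 : (1:ℝ) < δ := by
    have h1 : 0 < p - (n:ℝ) := by linarith
    have h2 : p - (n:ℝ) < 1 := by linarith
    have h3 := mul_pos (sub_pos.mpr h2) (inv_pos.mpr h1)
    have h4 := mul_inv_cancel₀ h1.ne'
    nlinarith [hδ]
  have hδ0 : (0:ℝ) < δ := by linarith
  set a := δ ^ (-(1 / (δ - 1))) with ha_def
  have ha : 0 < a := Real.rpow_pos_of_pos hδ0 _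
  have hgeq : ∀ s : ℝ, warpG δ s = (s + a) ^ δ - a ^ δ := by
    intro s
    have hc : δ ^ (-(δ / (δ - 1))) = a ^ δ := by
      rw [ha_def, ← Real.rpow_mul hδ0.le]
      congr 1
      field_simp
    rw [warpG, ← ha_def, hc]
  have hgd : ∀ s : ℝ, 0 ≤ s → HasDerivAt (warpG δ) (δ * (s + a) ^ (δ - 1)) s := by
    intro s hs
    have h1 : HasDerivAt (fun s : ℝ => s + a) 1 s := (hasDerivAt_id s).add_const _
    have h2 := h1.rpow_const (p := δ) (Or.inl (by positivity))
    have h3 := h2.sub_const (δ ^ (-(δ / (δ - 1))))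
    have e : warpG δ = fun x => (x + a) ^ δ - δ ^ (-(δ / (δ - 1))) := by
      funext x; simp [warpG, ha_def]
    rw [e]; simpa using h3
  have hgderiv : ∀ s : ℝ, 0 ≤ s → deriv (warpG δ) s = δ * (s + a) ^ (δ - 1) :=
    fun s hs => (hgd s hs).deriv
  have hgpos : ∀ s : ℝ, 0 < s → 0 < warpG δ s := by
    intro s hs
    rw [hgeq s]
    have := Real.rpow_lt_rpow ha.le (by linarith : a < s + a) hδ0
    linarith
  set b := σ ^ (1 / (1 - σ)) with hb_def
  have hb : 0 < b := Real.rpow_pos_of_pos hσ₀ _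
  have hjeq : ∀ t : ℝ, warpJ σ t = (t + b) ^ σ - b ^ σ := by
    intro t
    have hc : σ ^ (σ / (1 - σ)) = b ^ σ := by
      rw [hb_def, ← Real.rpow_mul hσ₀.le]
      congr 1
      field_simp
    rw [warpJ, ← hb_def, hc]
  have hjd : ∀ t : ℝ, 0 ≤ t → HasDerivAt (warpJ σ) (σ * (t + b) ^ (σ - 1)) t := by
    intro t ht
    have h1 : HasDerivAt (fun t : ℝ => t + b) 1 t := (hasDerivAt_id t).add_const _
    have h2 := h1.rpow_const (p := σ) (Or.inl (by positivity))
    have h3 := h2.sub_const (σ ^ (σ / (1 - σ)))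
    have e : warpJ σ = fun x => (x + b) ^ σ - σ ^ (σ / (1 - σ)) := by
      funext x; simp [warpJ, hb_def]
    rw [e]; simpa using h3
  have hjderiv : ∀ t : ℝ, 0 ≤ t → deriv (warpJ σ) t = σ * (t + b) ^ (σ - 1) :=
    fun t ht => (hjd t ht).deriv
  have hjpos : ∀ t : ℝ, 0 < t → 0 < warpJ σ t := by
    intro t ht
    rw [hjeq t]
    have := Real.rpow_lt_rpow hb.le (by linarith : b < t + b) hσ₀
    linarith
  -- second derivative facts for f
  have hcd1 : ContDiffOn ℝ 1 (deriv f) (Set.Ioi 0) :=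
    (hf.mono Set.Ioi_subset_Ici_self).deriv_of_isOpen isOpen_Ioi (by norm_num)
  have hdc : ContinuousOn (deriv f) (Set.Ioi 0) := hcd1.continuousOn
  have hf2' : ∀ s : ℝ, 0 < s → HasDerivAt (deriv f) (deriv (deriv f) s) s := by
    intro s hs
    exact ((hcd1.differentiableOn one_ne_zero).differentiableAt (isOpen_Ioi.mem_nhds hs)).hasDerivAt
  -- main reduction
  suffices key : ∀ K : ℝ, ∃ s, K ≤ s ∧
      (p - 2) * warpJ σ (f s) *
        (deriv (warpG δ) s * deriv f s / warpG δ s + deriv (deriv f) s) < 0 by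
    choose sk h1 h2 using fun k : ℕ => key (k : ℝ)
    exact ⟨sk, tendsto_atTop_mono h1 tendsto_natCast_atTop_atTop, h2⟩
  intro K
  by_contra hcon
  push_neg at hcon
  set S := max K 1 with hS_def
  have hS0 : (0:ℝ) < S := lt_of_lt_of_le one_pos (le_max_right K 1)
  have hX : ∀ s, S ≤ s →
      0 ≤ deriv (warpG δ) s * deriv f s / warpG δ s + deriv (deriv f) s := by
    intro s hs
    have hs0 : 0 < s := lt_of_lt_of_le hS0 hs
    have h := hcon s (le_trans (le_max_left K 1) hs)
    have hJ : 0 < warpJ σ (f s) := hjpos _ (hfpos s hs0)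
    by_contra hX0
    push_neg at hX0
    have : (p - 2) * warpJ σ (f s) *
        (deriv (warpG δ) s * deriv f s / warpG δ s + deriv (deriv f) s) < 0 :=
      mul_neg_of_pos_of_neg (mul_pos (by linarith) hJ) hX0
    linarith
  -- g·f' is monotone on [S,∞)
  have hmono : MonotoneOn (fun s => warpG δ s * deriv f s) (Set.Ici S) := by
    apply monotoneOn_of_deriv_nonneg (convex_Ici S)
    · intro x hx
      have hx0 : (0:ℝ) < x := lt_of_lt_of_le hS0 hx
      exact ((hgd x hx0.le).continuousAt.mul
        (hdc.continuousAt (isOpen_Ioi.mem_nhds hx0))).continuousWithinAt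
    · rw [interior_Ici]
      intro x hx
      have hx0 : (0:ℝ) < x := lt_trans hS0 hx
      exact ((hgd x hx0.le).differentiableAt.mul
        (hf2' x hx0).differentiableAt).differentiableWithinAt
    · rw [interior_Ici]
      intro x hx
      have hx0 : (0:ℝ) < x := lt_trans hS0 hx
      rw [show (fun s => warpG δ s * deriv f s) = warpG δ * deriv f from rfl,
        ((hgd x hx0.le).mul (hf2' x hx0)).deriv]
      have hXs := hX x (le_of_lt hx)
      have hg := hgpos x hx0
      have hkey2 : δ * (x + a) ^ (δ - 1) * deriv f x + warpG δ x * deriv (deriv f) x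
          = (deriv (warpG δ) x * deriv f x / warpG δ x + deriv (deriv f) x) * warpG δ x := by
        rw [hgderiv x hx0.le]
        field_simp
      rw [hkey2]
      exact mul_nonneg hXs hg.le
  set c := warpG δ S * deriv f S with hc_def
  have hc : 0 < c := mul_pos (hgpos S hS0) (hf'pos S hS0)
  have hlb : ∀ s, S ≤ s → c ≤ warpG δ s * deriv f s := by
    intro s hs
    exact hmono (Set.self_mem_Ici) hs hs
  -- key pointwise inequality
  have hkey : ∀ s, S ≤ s → ((n:ℝ) + 1 - p) * c * deriv (warpG δ) s ≤
      (n:ℝ) * warpJ σ (f s) * deriv (warpJ σ) (f s) := by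
    intro s hs
    have hs0 : 0 < s := lt_of_lt_of_le hS0 hs
    have hGpos : 0 < warpG δ s := hgpos s hs0
    have hF1pos : 0 < deriv f s := hf'pos s hs0
    have hJpos : 0 < warpJ σ (f s) := hjpos _ (hfpos s hs0)
    have hJ'pos : 0 < deriv (warpJ σ) (f s) := by
      rw [hjderiv _ (hfpos s hs0).le]
      exact mul_pos hσ₀ (Real.rpow_pos_of_pos (by linarith [hfpos s hs0]) _)
    have hG'pos : 0 < deriv (warpG δ) s := by
      rw [hgderiv s hs0.le]
      exact mul_pos hδ0 (Real.rpow_pos_of_pos (by linarith) _)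
    have hEpos : 0 < energyDensitySq n (warpG δ) (warpJ σ) f s := by
      rw [energyDensitySq]
      have h1 : 0 < deriv f s ^ 2 := pow_pos hF1pos 2
      have h2 : 0 ≤ (n:ℝ) * warpJ σ (f s) ^ 2 / warpG δ s ^ 2 := by positivity
      linarith
    have pde := hsol s hs0 hEpos
    rw [energyDensitySq] at pde hEpos
    have hXs := hX s hs
    have hlbs := hlb s hs
    set F1 := deriv f s with hF1_def
    set F2 := deriv (deriv f) s with hF2_def
    set G := warpG δ s with hG_def
    set G' := deriv (warpG δ) s with hG'_def
    set J := warpJ σ (f s) with hJ_def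
    set J' := deriv (warpJ σ) (f s) with hJ'_def
    clear_value F1 F2 G G' J J'
    have hG : G ≠ 0 := ne_of_gt hGpos
    have hE : F1 ^ 2 + (n:ℝ) * J ^ 2 / G ^ 2 ≠ 0 := ne_of_gt hEpos
    have he : F1 ^ 2 * G ^ 2 + (n:ℝ) * J ^ 2 ≠ 0 := by
      have h1 := mul_pos (pow_pos hF1pos 2) (pow_pos hGpos 2)
      have h2 : (0:ℝ) ≤ (n:ℝ) * J ^ 2 := by positivity
      nlinarith
    have key : (G' * F1 + F2 * G) * ((F1^2*G^2 + (n:ℝ)*J^2) + (p - 2) * F1 ^ 2 * G^2) * G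
        = (p - 1 - (n:ℝ)) * (F1^2*G^2 + (n:ℝ)*J^2) * G' * F1 * G
          + (n:ℝ) * J * J' * ((F1^2*G^2 + (n:ℝ)*J^2) - (p - 2) * F1 ^ 2 * G^2) := by
      field_simp at pde
      refine mul_right_cancel₀ (pow_ne_zero 3 hG) ?_
      linear_combination (G ^ 3) * pde
    have hXG : 0 ≤ G' * F1 + F2 * G := by
      have h2 : 0 ≤ (G' * F1 / G + F2) * G := mul_nonneg hXs hGpos.le
      have h3 : (G' * F1 / G + F2) * G = G' * F1 + F2 * G := by
        field_simp
      linarith [h3 ▸ h2]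
    have hepos : 0 < F1^2*G^2 + (n:ℝ)*J^2 := by
      have h1 := mul_pos (pow_pos hF1pos 2) (pow_pos hGpos 2)
      have h2 : (0:ℝ) ≤ (n:ℝ) * J ^ 2 := by positivity
      nlinarith
    have hx2 : 0 ≤ (p - 2) * F1 ^ 2 * G ^ 2 := by
      have := mul_pos (pow_pos hF1pos 2) (pow_pos hGpos 2)
      nlinarith
    have h1 : 0 ≤ (G' * F1 + F2 * G) * ((F1^2*G^2 + (n:ℝ)*J^2) + (p - 2) * F1 ^ 2 * G^2) * G :=
      mul_nonneg (mul_nonneg hXG (by linarith)) hGpos.le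
    have h2 : ((n:ℝ) + 1 - p) * (F1^2*G^2 + (n:ℝ)*J^2) * G' * F1 * G
        ≤ (n:ℝ) * J * J' * ((F1^2*G^2 + (n:ℝ)*J^2) - (p - 2) * F1 ^ 2 * G^2) := by
      linarith [key, h1]
    have h3 : (n:ℝ) * J * J' * ((F1^2*G^2 + (n:ℝ)*J^2) - (p - 2) * F1 ^ 2 * G^2)
        ≤ (n:ℝ) * J * J' * (F1^2*G^2 + (n:ℝ)*J^2) := by
      have hnn : (0:ℝ) ≤ (n:ℝ) * J * J' := by positivity
      nlinarith [mul_nonneg hnn hx2]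
    have h4 : (((n:ℝ) + 1 - p) * G' * (F1 * G)) * (F1^2*G^2 + (n:ℝ)*J^2)
        ≤ ((n:ℝ) * J * J') * (F1^2*G^2 + (n:ℝ)*J^2) := by linarith [h2, h3]
    have h5 : ((n:ℝ) + 1 - p) * G' * (F1 * G) ≤ (n:ℝ) * J * J' :=
      le_of_mul_le_mul_right h4 hepos
    have h6 : ((n:ℝ) + 1 - p) * c * G' ≤ ((n:ℝ) + 1 - p) * G' * (F1 * G) := by
      have hq : (0:ℝ) < (n:ℝ) + 1 - p := by linarith
      linarith [mul_le_mul_of_nonneg_left hlbs (mul_nonneg hq.le hG'pos.le)]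
    linarith
  -- upper bound on n·J·J'
  have hM : ∀ s, S ≤ s → (n:ℝ) * warpJ σ (f s) * deriv (warpJ σ) (f s)
      ≤ (n:ℝ) * ((B + b) ^ σ * (σ * b ^ (σ - 1))) := by
    intro s hs
    have hs0 : 0 < s := lt_of_lt_of_le hS0 hs
    have h1 : 0 ≤ f s := (hfpos s hs0).le
    have h2 : f s ≤ B := le_trans (le_abs_self _) (hB s hs0.le)
    have hj1 : warpJ σ (f s) ≤ (B + b) ^ σ := by
      rw [hjeq]
      have ha1 : (f s + b) ^ σ ≤ (B + b) ^ σ :=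
        Real.rpow_le_rpow (by positivity) (by linarith) hσ₀.le
      have ha2 : (0:ℝ) ≤ b ^ σ := Real.rpow_nonneg hb.le σ
      linarith
    have hj2 : deriv (warpJ σ) (f s) ≤ σ * b ^ (σ - 1) := by
      rw [hjderiv _ h1]
      exact mul_le_mul_of_nonneg_left
        (Real.rpow_le_rpow_of_nonpos hb (by linarith) (by linarith)) hσ₀.le
    have hj3 : 0 ≤ warpJ σ (f s) := (hjpos _ (hfpos s hs0)).le
    have hj4 : 0 ≤ deriv (warpJ σ) (f s) := by
      rw [hjderiv _ h1]
      exact (mul_pos hσ₀ (Real.rpow_pos_of_pos (by linarith) _)).le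
    have := mul_le_mul hj1 hj2 hj4 (Real.rpow_nonneg (by linarith) σ)
    have hn0 : (0:ℝ) ≤ (n:ℝ) := by positivity
    nlinarith [mul_le_mul_of_nonneg_left this hn0]
  -- contradiction via g' → ∞
  have hT : Tendsto (fun s : ℝ => δ * (s + a) ^ (δ - 1)) atTop atTop := by
    have h1 : Tendsto (fun x : ℝ => x ^ (δ - 1)) atTop atTop :=
      tendsto_rpow_atTop (by linarith)
    have h2 : Tendsto (fun s : ℝ => s + a) atTop atTop :=
      tendsto_atTop_add_const_right _ a tendsto_id
    exact (h1.comp h2).const_mul_atTop hδ0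
  have hq : (0:ℝ) < ((n:ℝ) + 1 - p) * c := mul_pos (by linarith) hc
  obtain ⟨s, hs1, hs2⟩ := (((hT.eventually_gt_atTop
    (((n:ℝ) * ((B + b) ^ σ * (σ * b ^ (σ - 1)))) / (((n:ℝ) + 1 - p) * c))).and
    (eventually_ge_atTop S)).exists)
  have hs0 : 0 < s := lt_of_lt_of_le hS0 hs2
  have h7 : (n:ℝ) * ((B + b) ^ σ * (σ * b ^ (σ - 1)))
      < δ * (s + a) ^ (δ - 1) * (((n:ℝ) + 1 - p) * c) := (div_lt_iff₀ hq).mp hs1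
  have h8 := hkey s hs2
  rw [hgderiv s hs0.le] at h8
  have h9 := hM s hs2
  linarith [h7, h8, h9]
end
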